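/- arXiv:math/0404126 — 6 statements merged into one kernel-verified Lean document; each statement's English description precedes it below -/
import Mathlib

section
/- For every integer n ≥ 1, ∑_{t∈ℛ_n} α(t)/t! = (n−1)!/2^{n−1}, where the sum is over all (isomorphism classes of) rooted trees with n nodes. -/
open scoped Classical

/-- Rooted plane trees: a tree is a root together with the ordered list of
the subtrees hanging from its children (left-to-right order). -/
inductive PTree where
  | node : List PTree → PTree

namespace PTree

instance : Inhabited PTree := ⟨.node []⟩

/-- number of nodes -/
def size : PTree → ℕ
  | node l => 1 + (l.attach.map (fun c => size c.1)).sum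
decreasing_by
  have := List.sizeOf_lt_of_mem c.2
  simp only [node.sizeOf_spec]; omega

/-- tree factorial: `t! = |t| * ∏ᵢ tᵢ!` -/
def tfact : PTree → ℕ
  | node l => size (node l) * (l.attach.map (fun c => tfact c.1)).prod
decreasing_by
  have := List.sizeOf_lt_of_mem c.2
  simp only [node.sizeOf_spec]; omega

/-- Shape equivalence: two plane trees have the same underlying rooted tree,
i.e. there is a bijection between children matching shape-equivalent subtrees. -/
inductive ShapeEq : PTree → PTree → Prop
  | node {l₁ l₂ : List PTree} (e : Fin l₁.length ≃ Fin l₂.length)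
      (h : ∀ i, ShapeEq (l₁.get i) (l₂.get (e i))) :
      ShapeEq (node l₁) (node l₂)

lemma size_pos (t : PTree) : 0 < t.size := by
  cases t; simp [size]

/-- The plane tree encoded by a parent function `p : Fin n → Fin n`:
`shapeAux n p fuel i` is the subtree rooted at node `i`, whose children are the
`j` with `p j = i` and `i < j` (ordered by label). `fuel = n` suffices. -/
def shapeAux (n : ℕ) (p : Fin n → Fin n) : ℕ → Fin n → PTree
  | 0, _ => node []
  | fuel+1, i =>
      node (((List.finRange n).filter (fun j => decide (p j = i ∧ i < j))).map
        (shapeAux n p fuel))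

/-- The plane tree encoded by a parent function (rooted at node `0`). -/
def shapeOf {n : ℕ} (p : Fin n → Fin n) : PTree :=
  if h : 0 < n then shapeAux n p n ⟨0, h⟩ else node []

/-- `alpha t` is the number of rooted labelled (increasing) trees of shape `t`:
labelled trees are encoded by their parent function, the root carrying the
label `0` and labels increasing away from the root. -/
noncomputable def alpha (t : PTree) : ℕ :=
  Nat.card {p : Fin t.size → Fin t.size //
    p ⟨0, t.size_pos⟩ = ⟨0, t.size_pos⟩ ∧
    (∀ j : Fin t.size, 0 < (j : ℕ) → (p j : ℕ) < j) ∧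
    ShapeEq (shapeOf p) t}

/-- `kappa t` is the number of rooted plane trees of shape `t`. -/
noncomputable def kappa (t : PTree) : ℕ := Nat.card {t' : PTree // ShapeEq t' t}

/-- symmetry factor: `σ(B₊(t₁^{n₁},…,t_m^{n_m})) = ∏ᵢ nᵢ! σ(tᵢ)^{nᵢ}`. -/
noncomputable def sym : PTree → ℕ
  | node l =>
      (∏ j : Fin l.length,
        (l.take ((j : ℕ) + 1)).countP (fun c => decide (ShapeEq c (l.get j)))) *
      (l.attach.map (fun c => sym c.1)).prod
decreasing_by
  have := List.sizeOf_lt_of_mem c.2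
  simp only [node.sizeOf_spec]; omega

/-- elementary differentials: `δ_• = 1`, `δ_t = k! ψ_k ∏ᵢ δ_{tᵢ}`. -/
def delta (ψ : ℕ → ℝ) : PTree → ℝ
  | node l =>
      (Nat.factorial l.length : ℝ) * ψ l.length *
      (l.attach.map (fun c => delta ψ c.1)).prod
decreasing_by
  have := List.sizeOf_lt_of_mem c.2
  simp only [node.sizeOf_spec]; omega

/-- bare Green function with weights `B`: `B(t) = B_{|t|} ∏ᵢ B(tᵢ)`. -/
def bare (B : ℕ → ℝ) : PTree → ℝ
  | node l => B (size (node l)) * (l.attach.map (fun c => bare B c.1)).prod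
decreasing_by
  have := List.sizeOf_lt_of_mem c.2
  simp only [node.sizeOf_spec]; omega

/-- `wt ψ t = ∏_{v ∈ t} ψ (d v)` where `d v` is the outdegree of `v`. -/
def wt (ψ : ℕ → ℝ) : PTree → ℝ
  | node l => ψ l.length * (l.attach.map (fun c => wt ψ c.1)).prod
decreasing_by
  have := List.sizeOf_lt_of_mem c.2
  simp only [node.sizeOf_spec]; omega

/-- `nodeProd B t = ∏_{w ≠ root} B_{|t_w|}`, product over non-root nodes of `t`. -/
def nodeProd (B : ℕ → ℝ) : PTree → ℝ
  | node l => (l.attach.map (fun c => B (size c.1) * nodeProd B c.1)).prod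
decreasing_by
  have := List.sizeOf_lt_of_mem c.2
  simp only [node.sizeOf_spec]; omega

/-- `R` is a set of representatives of the rooted trees with `n` nodes:
every plane tree of size `n` is shape-equivalent to exactly one member of `R`. -/
def IsTransversal (n : ℕ) (R : Finset PTree) : Prop :=
  (∀ t ∈ R, size t = n) ∧
  ∀ t : PTree, size t = n → ∃! u, u ∈ R ∧ ShapeEq t u

end PTree

namespace AlphaAux

open Finset

variable {n : ℕ}

/-- validity of a parent function -/
def Good (p : Fin n → Fin n) : Prop :=
  (∀ j : Fin n, (j : ℕ) = 0 → p j = j) ∧ ∀ j : Fin n, 0 < (j : ℕ) → (p j : ℕ) < (j : ℕ)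

/-- `i` is an ancestor of `j` (equivalently `j` is a descendant of `i`). -/
def Desc (p : Fin n → Fin n) (i j : Fin n) : Prop := ∃ k, p^[k] j = i

variable {p : Fin n → Fin n}

lemma Good.apply_le (hp : Good p) (x : Fin n) : (p x : ℕ) ≤ x := by
  rcases Nat.eq_zero_or_pos (x : ℕ) with h | h
  · rw [hp.1 x h]
  · exact (hp.2 x h).le

lemma Good.iterate_le (hp : Good p) (k : ℕ) (x : Fin n) : (p^[k] x : ℕ) ≤ x := by
  induction k with
  | zero => simp
  | succ k ih =>
    rw [Function.iterate_succ_apply']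
    exact le_trans (hp.apply_le _) ih

lemma Desc.le (hp : Good p) {i j : Fin n} (h : Desc p i j) : (i : ℕ) ≤ j := by
  obtain ⟨k, hk⟩ := h
  simpa [hk] using hp.iterate_le k j

@[simp] lemma desc_refl (i : Fin n) : Desc p i i := ⟨0, rfl⟩

lemma Desc.trans {i j k : Fin n} (h1 : Desc p i j) (h2 : Desc p j k) : Desc p i k := by
  obtain ⟨a, ha⟩ := h1; obtain ⟨b, hb⟩ := h2
  exact ⟨a + b, by rw [Function.iterate_add_apply, hb, ha]⟩

lemma Desc.antisymm (hp : Good p) {i j : Fin n} (h1 : Desc p i j) (h2 : Desc p j i) :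
    i = j := Fin.ext (le_antisymm (h1.le hp) (h2.le hp))

lemma desc_comparable {u v j : Fin n} (h1 : Desc p u j) (h2 : Desc p v j) :
    Desc p u v ∨ Desc p v u := by
  obtain ⟨a, ha⟩ := h1; obtain ⟨b, hb⟩ := h2
  rcases le_total a b with h | h
  · right
    refine ⟨b - a, ?_⟩
    rw [← ha, ← Function.iterate_add_apply, Nat.sub_add_cancel h, hb]
  · left
    refine ⟨a - b, ?_⟩
    rw [← hb, ← Function.iterate_add_apply, Nat.sub_add_cancel h, ha]

lemma desc_root (hp : Good p) {r : Fin n} (hr : (r : ℕ) = 0) (j : Fin n) : Desc p r j := by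
  suffices H : ∀ m (j : Fin n), (j : ℕ) = m → Desc p r j by exact H _ j rfl
  intro m
  induction m using Nat.strong_induction_on with
  | _ m IH =>
    intro j hj
    rcases Nat.eq_zero_or_pos m with h | h
    · exact ⟨0, Fin.ext (by simp [hj, h, hr])⟩
    · have hlt : (p j : ℕ) < m := hj ▸ hp.2 j (hj ▸ h)
      obtain ⟨k, hk⟩ := IH _ hlt (p j) rfl
      exact ⟨k + 1, by simpa [Function.iterate_add_apply] using hk⟩

/-- descendants of `i` as a finset -/
noncomputable def descF (p : Fin n → Fin n) (i : Fin n) : Finset (Fin n) :=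
  univ.filter (fun j => Desc p i j)

noncomputable def sN (p : Fin n → Fin n) (i : Fin n) : ℕ := (descF p i).card

noncomputable def children (p : Fin n → Fin n) (i : Fin n) : Finset (Fin n) :=
  univ.filter (fun c => p c = i ∧ (i : ℕ) < (c : ℕ))

lemma mem_descF {i j : Fin n} : j ∈ descF p i ↔ Desc p i j := by simp [descF]

lemma mem_children {i c : Fin n} : c ∈ children p i ↔ p c = i ∧ (i : ℕ) < (c : ℕ) := by
  simp [children]

lemma self_mem_descF (i : Fin n) : i ∈ descF p i := mem_descF.2 (desc_refl i)

lemma sN_pos (i : Fin n) : 0 < sN p i :=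
  Finset.card_pos.2 ⟨i, self_mem_descF i⟩

lemma child_desc {i c : Fin n} (hc : c ∈ children p i) : Desc p i c :=
  ⟨1, (mem_children.1 hc).1⟩

lemma child_ne {i c : Fin n} (hc : c ∈ children p i) : c ≠ i := by
  obtain ⟨-, h⟩ := mem_children.1 hc
  exact fun h' => absurd (h' ▸ h) (lt_irrefl _)

/-- a proper descendant factors through some child -/
lemma exists_child (hp : Good p) {i j : Fin n} (h : Desc p i j) (hne : j ≠ i) :
    ∃ c ∈ children p i, Desc p c j := by
  have hex : ∃ k, p^[k] j = i := h
  classical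
  have hk : p^[Nat.find hex] j = i := Nat.find_spec hex
  have hk0 : Nat.find hex ≠ 0 := by
    intro h0
    exact hne (by simpa [h0] using hk)
  obtain ⟨k', hks⟩ := Nat.exists_eq_succ_of_ne_zero hk0
  set c := p^[k'] j with hc
  have hpc : p c = i := by
    rw [hks, Function.iterate_succ_apply'] at hk
    exact hc ▸ hk
  have hcne : c ≠ i := by
    intro hci
    exact Nat.find_min hex (hks ▸ Nat.lt_succ_self k') hci
  have hic : (i : ℕ) < (c : ℕ) := by
    rcases Nat.eq_zero_or_pos (c : ℕ) with h0 | h0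
    · exact absurd (hp.1 c h0 ▸ hpc) hcne
    · exact hpc ▸ hp.2 c h0
  exact ⟨c, mem_children.2 ⟨hpc, hic⟩, ⟨k', rfl⟩⟩


lemma desc_child_eq (hp : Good p) {i c c' : Fin n} (hc : c ∈ children p i)
    (hc' : c' ∈ children p i) (h : Desc p c c') : c = c' := by
  obtain ⟨k, hk⟩ := h
  cases k with
  | zero => exact hk.symm
  | succ k =>
    exfalso
    rw [Function.iterate_succ_apply, (mem_children.1 hc').1] at hk
    have : (c : ℕ) ≤ (i : ℕ) := hk ▸ hp.iterate_le k i
    exact absurd (mem_children.1 hc).2 (not_lt.2 this)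

lemma children_disjoint (hp : Good p) {i : Fin n} :
    ∀ c ∈ children p i, ∀ c' ∈ children p i, c ≠ c' → Disjoint (descF p c) (descF p c') := by
  intro c hc c' hc' hne
  rw [Finset.disjoint_left]
  intro j hj hj'
  rcases desc_comparable (mem_descF.1 hj) (mem_descF.1 hj') with h | h
  · exact hne (desc_child_eq hp hc hc' h)
  · exact hne (desc_child_eq hp hc hc' ((desc_child_eq hp hc' hc h).symm ▸ desc_refl c))

lemma root_not_mem_child_desc (hp : Good p) {i c : Fin n} (hc : c ∈ children p i) :
    i ∉ descF p c := by
  intro h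
  have := (mem_descF.1 h).le hp
  exact absurd (mem_children.1 hc).2 (not_lt.2 this)

lemma descF_partition (hp : Good p) (i : Fin n) :
    descF p i = insert i ((children p i).biUnion (descF p)) := by
  ext j
  simp only [Finset.mem_insert, Finset.mem_biUnion, mem_descF]
  constructor
  · intro h
    by_cases hij : j = i
    · exact Or.inl hij
    · obtain ⟨c, hc, hcj⟩ := exists_child hp h hij
      exact Or.inr ⟨c, hc, mem_descF.1 (mem_descF.2 hcj)⟩
  · rintro (rfl | ⟨c, hc, hcj⟩)
    · exact desc_refl j
    · exact (child_desc hc).trans (mem_descF.1 (mem_descF.2 hcj))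

lemma root_not_mem_biUnion (hp : Good p) (i : Fin n) :
    i ∉ (children p i).biUnion (descF p) := by
  intro hmem
  obtain ⟨c, hc, hi⟩ := Finset.mem_biUnion.1 hmem
  exact root_not_mem_child_desc hp hc hi

lemma sN_eq (hp : Good p) (i : Fin n) :
    sN p i = 1 + ∑ c ∈ children p i, sN p c := by
  rw [sN, descF_partition hp i, Finset.card_insert_of_notMem (root_not_mem_biUnion hp i),
    Finset.card_biUnion (children_disjoint hp), add_comm]
  rfl

lemma prod_descF {M : Type*} [CommMonoid M] (hp : Good p) (i : Fin n) (f : Fin n → M) :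
    ∏ j ∈ descF p i, f j = f i * ∏ c ∈ children p i, ∏ j ∈ descF p c, f j := by
  rw [descF_partition hp i, Finset.prod_insert (root_not_mem_biUnion hp i),
    Finset.prod_biUnion (children_disjoint hp)]

lemma sN_child_lt (hp : Good p) {i c : Fin n} (hc : c ∈ children p i) : sN p c < sN p i := by
  rw [sN_eq hp i]
  calc sN p c ≤ ∑ c' ∈ children p i, sN p c' := Finset.single_le_sum (fun _ _ => Nat.zero_le _) hc
  _ < 1 + _ := Nat.lt_one_add_iff.2 le_rfl

/-- set of nodes on the tree-path from `i` down to `k` -/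
noncomputable def between (p : Fin n → Fin n) (i k : Fin n) : Finset (Fin n) :=
  univ.filter (fun u => Desc p i u ∧ Desc p u k)

/-- the product of `s(u)/(s(u)+1)` along the path from `i` down to `k` -/
noncomputable def cp (p : Fin n → Fin n) (i k : Fin n) : ℝ :=
  ∏ u ∈ between p i k, (sN p u : ℝ) / (sN p u + 1)

lemma between_self (hp : Good p) (i : Fin n) : between p i i = {i} := by
  ext u
  simp only [between, Finset.mem_filter, Finset.mem_univ, true_and, Finset.mem_singleton]
  constructor
  · rintro ⟨h1, h2⟩; exact h2.antisymm hp h1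
  · rintro rfl; exact ⟨desc_refl u, desc_refl u⟩

lemma between_child (hp : Good p) {i c k : Fin n} (hc : c ∈ children p i) (hk : Desc p c k) :
    between p i k = insert i (between p c k) := by
  ext u
  simp only [between, Finset.mem_filter, Finset.mem_univ, true_and, Finset.mem_insert]
  constructor
  · rintro ⟨hiu, huk⟩
    rcases desc_comparable huk hk with h | h
    · -- h : u is an ancestor of c : u = c or u an ancestor of i
      obtain ⟨m, hm⟩ := h
      cases m with
      | zero => exact Or.inr ⟨⟨0, by simpa using hm.symm⟩, huk⟩
      | succ m =>
        rw [Function.iterate_succ_apply, (mem_children.1 hc).1] at hm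
        exact Or.inl (Desc.antisymm hp hiu ⟨m, hm⟩).symm
    · exact Or.inr ⟨h, huk⟩
  · rintro (rfl | ⟨hcu, huk⟩)
    · exact ⟨desc_refl u, (child_desc hc).trans hk⟩
    · exact ⟨(child_desc hc).trans hcu, huk⟩

lemma root_not_mem_between (hp : Good p) {i c k : Fin n} (hc : c ∈ children p i) :
    i ∉ between p c k := by
  intro h
  have hci : Desc p c i := (Finset.mem_filter.1 h).2.1
  exact absurd (mem_children.1 hc).2 (not_lt.2 (hci.le hp))

lemma cp_self (hp : Good p) (i : Fin n) : cp p i i = (sN p i : ℝ) / (sN p i + 1) := by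
  rw [cp, between_self hp, Finset.prod_singleton]

lemma cp_child (hp : Good p) {i c k : Fin n} (hc : c ∈ children p i) (hk : Desc p c k) :
    cp p i k = ((sN p i : ℝ) / (sN p i + 1)) * cp p c k := by
  rw [cp, between_child hp hc hk, Finset.prod_insert (root_not_mem_between hp hc)]
  rfl

/-- Key lemma: the sum over descendants `k` of `i` of the path products is `s(i)/2`. -/
lemma key_sum (hp : Good p) (i : Fin n) :
    ∑ k ∈ descF p i, cp p i k = (sN p i : ℝ) / 2 := by
  suffices H : ∀ m, ∀ i : Fin n, sN p i = m →
      ∑ k ∈ descF p i, cp p i k = (sN p i : ℝ) / 2 from H _ i rfl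
  intro m
  induction m using Nat.strong_induction_on with
  | _ m IH =>
    intro i him
    rw [descF_partition hp i, Finset.sum_insert (root_not_mem_biUnion hp i),
      Finset.sum_biUnion (children_disjoint hp)]
    have hchild : ∀ c ∈ children p i,
        ∑ k ∈ descF p c, cp p i k = ((sN p i : ℝ) / (sN p i + 1)) * ((sN p c : ℝ) / 2) := by
      intro c hc
      rw [Finset.sum_congr rfl (fun k hk => cp_child hp hc (mem_descF.1 hk)), ← Finset.mul_sum,
        IH (sN p c) (him ▸ sN_child_lt hp hc) c rfl]
    rw [Finset.sum_congr rfl hchild, ← Finset.mul_sum, cp_self hp i]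
    have hs := sN_eq hp i
    have hsum : ((∑ c ∈ children p i, sN p c : ℕ) : ℝ) = (sN p i : ℝ) - 1 := by
      rw [hs]; push_cast; ring
    have hpos : (0 : ℝ) < (sN p i : ℝ) := by exact_mod_cast sN_pos i
    push_cast at hsum ⊢
    rw [← Finset.sum_div, hsum]
    field_simp
    ring

/-! ### Extension by a new maximal leaf -/

/-- attach a new leaf labelled `n` to node `k` -/
def extF (p : Fin n → Fin n) (k : Fin n) : Fin (n+1) → Fin (n+1) :=
  fun j => if h : (j : ℕ) < n then (p ⟨j, h⟩).castSucc else k.castSucc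

lemma extF_castSucc (p : Fin n → Fin n) (k : Fin n) (x : Fin n) :
    extF p k x.castSucc = (p x).castSucc := by
  have h : ((x.castSucc : Fin (n+1)) : ℕ) < n := x.isLt
  rw [extF]
  rw [dif_pos h]
  congr 1

lemma extF_last (p : Fin n → Fin n) (k : Fin n) : extF p k (Fin.last n) = k.castSucc := by
  rw [extF, dif_neg (by simp)]

lemma extF_iterate (p : Fin n → Fin n) (k : Fin n) (m : ℕ) (x : Fin n) :
    (extF p k)^[m] x.castSucc = (p^[m] x).castSucc := by
  induction m with
  | zero => simp
  | succ m ih =>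
    rw [Function.iterate_succ_apply', Function.iterate_succ_apply', ih, extF_castSucc]

lemma good_extF (hp : Good p) (k : Fin n) (hn : 0 < n) : Good (extF p k) := by
  constructor
  · intro j hj
    have hlt : (j : ℕ) < n := hj ▸ hn
    rw [show extF p k j = (p ⟨j, hlt⟩).castSucc from dif_pos hlt,
      hp.1 ⟨j, hlt⟩ hj]
    exact Fin.ext (by simp)
  · intro j hj
    by_cases h : (j : ℕ) < n
    · rw [show extF p k j = (p ⟨j, h⟩).castSucc from dif_pos h]
      simpa using hp.2 ⟨j, h⟩ hj
    · rw [show extF p k j = k.castSucc from dif_neg h]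
      have hj' : (j : ℕ) = n := le_antisymm (Nat.lt_succ_iff.1 j.isLt) (not_lt.1 h)
      simpa [hj'] using k.isLt

lemma desc_extF_cast {k i j : Fin n} :
    Desc (extF p k) i.castSucc j.castSucc ↔ Desc p i j := by
  constructor
  · rintro ⟨m, hm⟩
    rw [extF_iterate] at hm
    exact ⟨m, Fin.castSucc_injective n hm⟩
  · rintro ⟨m, hm⟩
    exact ⟨m, by rw [extF_iterate, hm]⟩

lemma desc_extF_last {k i : Fin n} :
    Desc (extF p k) i.castSucc (Fin.last n) ↔ Desc p i k := by
  constructor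
  · rintro ⟨m, hm⟩
    cases m with
    | zero =>
      exact absurd hm.symm (Fin.ne_of_lt (Fin.castSucc_lt_last i))
    | succ m =>
      rw [Function.iterate_succ_apply, extF_last, extF_iterate] at hm
      exact ⟨m, Fin.castSucc_injective n hm⟩
  · rintro ⟨m, hm⟩
    exact ⟨m + 1, by rw [Function.iterate_succ_apply, extF_last, extF_iterate, hm]⟩

lemma desc_extF_last_left (hp : Good p) (hn : 0 < n) {k : Fin n} {j : Fin (n+1)}
    (h : Desc (extF p k) (Fin.last n) j) : j = Fin.last n := by
  have hle := h.le (good_extF hp k hn)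
  exact Fin.ext (le_antisymm (Nat.lt_succ_iff.1 j.isLt) (by simpa using hle))

lemma sN_extF_cast (hp : Good p) (hn : 0 < n) (k i : Fin n) :
    sN (extF p k) i.castSucc = sN p i + (if Desc p i k then 1 else 0) := by
  by_cases hik : Desc p i k
  · have hset : descF (extF p k) i.castSucc =
        (descF p i).image Fin.castSucc ∪ {Fin.last n} := by
      ext j
      simp only [mem_descF, Finset.mem_union, Finset.mem_image, Finset.mem_singleton]
      rcases Fin.eq_castSucc_or_eq_last j with ⟨j', rfl⟩ | rfl
      · rw [desc_extF_cast]
        constructor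
        · intro h
          exact Or.inl ⟨j', h, rfl⟩
        · rintro (⟨x, hx, hxe⟩ | h)
          · exact (Fin.castSucc_injective n hxe) ▸ hx
          · exact absurd h (Fin.ne_of_lt (Fin.castSucc_lt_last j'))
      · rw [desc_extF_last]
        exact ⟨fun _ => Or.inr rfl, fun _ => hik⟩
    rw [sN, hset, Finset.card_union_of_disjoint, Finset.card_image_of_injective _
      (Fin.castSucc_injective n), Finset.card_singleton, if_pos hik]
    · rfl
    · rw [Finset.disjoint_singleton_right]
      intro hmem
      obtain ⟨x, -, hx⟩ := Finset.mem_image.1 hmem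
      exact absurd hx (Fin.ne_of_lt (Fin.castSucc_lt_last x))
  · have hset : descF (extF p k) i.castSucc = (descF p i).image Fin.castSucc := by
      ext j
      simp only [mem_descF, Finset.mem_image]
      rcases Fin.eq_castSucc_or_eq_last j with ⟨j', rfl⟩ | rfl
      · rw [desc_extF_cast]
        constructor
        · intro h
          exact ⟨j', h, rfl⟩
        · rintro ⟨x, hx, hxe⟩
          exact (Fin.castSucc_injective n hxe) ▸ hx
      · rw [desc_extF_last]
        constructor
        · intro h
          exact absurd h hik
        · rintro ⟨x, -, hx⟩
          exact absurd hx (Fin.ne_of_lt (Fin.castSucc_lt_last x))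
    rw [sN, hset, Finset.card_image_of_injective _ (Fin.castSucc_injective n), if_neg hik,
      add_zero]
    rfl

lemma sN_extF_last (hp : Good p) (hn : 0 < n) (k : Fin n) :
    sN (extF p k) (Fin.last n) = 1 := by
  have hset : descF (extF p k) (Fin.last n) = {Fin.last n} := by
    ext j
    simp only [mem_descF, Finset.mem_singleton]
    exact ⟨fun h => desc_extF_last_left hp hn h, fun h => h ▸ desc_refl _⟩
  rw [sN, hset, Finset.card_singleton]

/-! ### The weight -/

noncomputable def Wr (p : Fin n → Fin n) : ℝ := ∏ i, (sN p i : ℝ)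

lemma Wr_pos (p : Fin n → Fin n) : 0 < Wr p :=
  Finset.prod_pos fun i _ => by exact_mod_cast sN_pos i

lemma between_root (hp : Good p) {r : Fin n} (hr : (r : ℕ) = 0) (k : Fin n) :
    between p r k = univ.filter (fun u => Desc p u k) := by
  ext u
  simp [between, desc_root hp hr u]

lemma inv_Wr_extF (hp : Good p) (hn : 0 < n) (k : Fin n) :
    1 / Wr (extF p k) = cp p ⟨0, hn⟩ k / Wr p := by
  classical
  set D : Finset (Fin n) := univ.filter (fun u => Desc p u k) with hD
  set Dc : Finset (Fin n) := univ.filter (fun u => ¬ Desc p u k) with hDc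
  have hA : (0:ℝ) < ∏ u ∈ D, ((sN p u : ℝ) + 1) :=
    Finset.prod_pos fun u _ => by positivity
  have hC : (0:ℝ) < ∏ u ∈ D, (sN p u : ℝ) :=
    Finset.prod_pos fun u _ => by exact_mod_cast sN_pos u
  have hB : (0:ℝ) < ∏ u ∈ Dc, (sN p u : ℝ) :=
    Finset.prod_pos fun u _ => by exact_mod_cast sN_pos u
  have hWext : Wr (extF p k) = (∏ u ∈ D, ((sN p u : ℝ) + 1)) * ∏ u ∈ Dc, (sN p u : ℝ) := by
    rw [Wr, Fin.prod_univ_castSucc, sN_extF_last hp hn k, Nat.cast_one, mul_one]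
    have step : ∀ i : Fin n, ((sN (extF p k) i.castSucc : ℕ) : ℝ) =
        if Desc p i k then (sN p i : ℝ) + 1 else (sN p i : ℝ) := by
      intro i
      rw [sN_extF_cast hp hn k i]
      split <;> push_cast <;> ring
    rw [Finset.prod_congr rfl (fun i _ => step i), Finset.prod_ite]
  have hW : Wr p = (∏ u ∈ D, (sN p u : ℝ)) * ∏ u ∈ Dc, (sN p u : ℝ) :=
    (Finset.prod_filter_mul_prod_filter_not univ _ _).symm
  have hcp : cp p ⟨0, hn⟩ k =
      (∏ u ∈ D, (sN p u : ℝ)) / ∏ u ∈ D, ((sN p u : ℝ) + 1) := by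
    rw [cp, between_root hp rfl, ← hD, ← Finset.prod_div_distrib]
  rw [hWext, hW, hcp]
  field_simp

lemma sum_inv_Wr_extF (hp : Good p) (hn : 0 < n) :
    ∑ k : Fin n, 1 / Wr (extF p k) = ((n : ℝ) / 2) * (1 / Wr p) := by
  have hroot : descF p ⟨0, hn⟩ = univ := by
    ext j
    simp [mem_descF, desc_root hp (show ((⟨0, hn⟩ : Fin n) : ℕ) = 0 from rfl) j]
  have hsroot : sN p ⟨0, hn⟩ = n := by
    rw [sN, hroot, Finset.card_univ, Fintype.card_fin]
  calc ∑ k : Fin n, 1 / Wr (extF p k) = ∑ k : Fin n, cp p ⟨0, hn⟩ k / Wr p :=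
        Finset.sum_congr rfl fun k _ => inv_Wr_extF hp hn k
    _ = (∑ k ∈ descF p ⟨0, hn⟩, cp p ⟨0, hn⟩ k) / Wr p := by rw [hroot, Finset.sum_div]
    _ = ((n : ℝ) / 2) * (1 / Wr p) := by rw [key_sum hp, hsroot]; ring

/-! ### Counting -/

noncomputable def Q (n : ℕ) : Finset (Fin n → Fin n) := univ.filter Good

lemma mem_Q {q : Fin n → Fin n} : q ∈ Q n ↔ Good q := by simp [Q]

def resF (hn : 0 < n) (q : Fin (n+1) → Fin (n+1)) : Fin n → Fin n :=
  fun j => ⟨(q j.castSucc : ℕ) % n, Nat.mod_lt _ hn⟩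

def lastF (hn : 0 < n) (q : Fin (n+1) → Fin (n+1)) : Fin n :=
  ⟨(q (Fin.last n) : ℕ) % n, Nat.mod_lt _ hn⟩

variable {q : Fin (n+1) → Fin (n+1)}

lemma good_cast_lt (hq : Good q) (hn : 0 < n) (j : Fin n) : (q j.castSucc : ℕ) < n := by
  rcases Nat.eq_zero_or_pos (j : ℕ) with h | h
  · rw [hq.1 j.castSucc (by simpa using h)]
    simpa using h ▸ hn
  · have := hq.2 j.castSucc (by simpa using h)
    exact lt_trans (by simpa using this) j.isLt

lemma good_last_lt (hq : Good q) (hn : 0 < n) : (q (Fin.last n) : ℕ) < n := by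
  simpa using hq.2 (Fin.last n) (by simpa using hn)

lemma resF_val (hq : Good q) (hn : 0 < n) (j : Fin n) :
    (resF hn q j : ℕ) = (q j.castSucc : ℕ) :=
  Nat.mod_eq_of_lt (good_cast_lt hq hn j)

lemma lastF_val (hq : Good q) (hn : 0 < n) :
    (lastF hn q : ℕ) = (q (Fin.last n) : ℕ) :=
  Nat.mod_eq_of_lt (good_last_lt hq hn)

lemma good_resF (hq : Good q) (hn : 0 < n) : Good (resF hn q) := by
  constructor
  · intro j hj
    apply Fin.ext
    rw [resF_val hq hn j, hq.1 j.castSucc (by simpa using hj)]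
    simpa using hj
  · intro j hj
    rw [resF_val hq hn j]
    simpa using hq.2 j.castSucc (by simpa using hj)

lemma extF_resF (hq : Good q) (hn : 0 < n) : extF (resF hn q) (lastF hn q) = q := by
  funext j
  rcases Fin.eq_castSucc_or_eq_last j with ⟨j', rfl⟩ | rfl
  · rw [extF_castSucc]
    exact Fin.ext (by simpa using resF_val hq hn j')
  · rw [extF_last]
    exact Fin.ext (by simpa using lastF_val hq hn)

lemma resF_extF (hp : Good p) (hn : 0 < n) (k : Fin n) : resF hn (extF p k) = p := by
  funext j
  apply Fin.ext
  have : (extF p k j.castSucc : ℕ) = (p j : ℕ) := by rw [extF_castSucc]; simp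
  simp only [resF, this]
  exact Nat.mod_eq_of_lt (p j).isLt

lemma lastF_extF (hp : Good p) (hn : 0 < n) (k : Fin n) : lastF hn (extF p k) = k := by
  apply Fin.ext
  have : (extF p k (Fin.last n) : ℕ) = (k : ℕ) := by rw [extF_last]; simp
  simp only [lastF, this]
  exact Nat.mod_eq_of_lt k.isLt

lemma Scount : ∀ n : ℕ, 0 < n →
    ∑ q ∈ Q n, 1 / Wr q = (Nat.factorial (n-1) : ℝ) / 2 ^ (n-1) := by
  intro n hn
  induction n, hn using Nat.le_induction with
  | base =>
    have hQ : Q 1 = (univ : Finset (Fin 1 → Fin 1)) := by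
      ext q
      simp only [mem_Q, Finset.mem_univ, iff_true]
      exact ⟨fun j _ => Subsingleton.elim _ _, fun j hj => by simp at hj⟩
    have hW : ∀ q : Fin 1 → Fin 1, Wr q = 1 := by
      intro q
      rw [Wr, Fin.prod_univ_one]
      have h1 : sN q 0 = 1 := by
        refine le_antisymm ?_ (sN_pos 0)
        calc sN q 0 ≤ (univ : Finset (Fin 1)).card := Finset.card_le_card (Finset.subset_univ _)
        _ = 1 := by simp
      rw [h1, Nat.cast_one]
    rw [hQ, Finset.sum_congr rfl (fun q _ => by rw [hW q])]
    simp
  | succ n hn IH =>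
    have hbij : ∑ x ∈ (Q n) ×ˢ (univ : Finset (Fin n)), 1 / Wr (extF x.1 x.2) =
        ∑ q ∈ Q (n+1), 1 / Wr q := by
      refine Finset.sum_nbij' (fun x => extF x.1 x.2) (fun q => (resF hn q, lastF hn q))
        ?_ ?_ ?_ ?_ ?_
      · rintro ⟨p, k⟩ hx
        exact mem_Q.2 (good_extF (mem_Q.1 (Finset.mem_product.1 hx).1) k hn)
      · intro q hq
        refine Finset.mem_product.2 ⟨mem_Q.2 (good_resF (mem_Q.1 hq) hn), Finset.mem_univ _⟩
      · rintro ⟨p, k⟩ hx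
        have hp : Good p := mem_Q.1 (Finset.mem_product.1 hx).1
        dsimp only
        rw [resF_extF hp hn k, lastF_extF hp hn k]
      · intro q hq
        exact extF_resF (mem_Q.1 hq) hn
      · rintro ⟨p, k⟩ hx
        rfl
    rw [← hbij, Finset.sum_product]
    have hrow : ∀ p ∈ Q n, ∑ k : Fin n, 1 / Wr (extF p k) = ((n : ℝ) / 2) * (1 / Wr p) :=
      fun p hp => sum_inv_Wr_extF (mem_Q.1 hp) hn
    rw [Finset.sum_congr rfl hrow, ← Finset.mul_sum, IH]
    obtain ⟨m, rfl⟩ : ∃ m, n = m + 1 := ⟨n - 1, (Nat.succ_pred_eq_of_pos hn).symm⟩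
    simp only [Nat.add_sub_cancel]
    rw [Nat.factorial_succ, pow_succ]
    push_cast
    field_simp

end AlphaAux


set_option maxRecDepth 4000

namespace AlphaAux
open PTree

lemma attach_map' {α β : Type*} (l : List α) (f : α → β) :
    l.attach.map (fun c => f c.1) = l.map f := List.attach_map_val (l := l) (f := f)

lemma size_node (l : List PTree) : size (node l) = 1 + (l.map size).sum := by
  rw [size, attach_map']

lemma tfact_node (l : List PTree) :
    tfact (node l) = size (node l) * (l.map tfact).prod := by
  rw [tfact, attach_map']

lemma map_sum_get {α M : Type*} [AddCommMonoid M] (l : List α) (f : α → M) :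
    (l.map f).sum = ∑ i : Fin l.length, f (l.get i) := by
  induction l with
  | nil => simp
  | cons a l ih =>
    rw [List.map_cons, List.sum_cons, ih]
    exact (Fin.sum_univ_succ (f := fun i : Fin (l.length+1) => f ((a :: l).get i))).symm

lemma map_prod_get {α M : Type*} [CommMonoid M] (l : List α) (f : α → M) :
    (l.map f).prod = ∏ i : Fin l.length, f (l.get i) := by
  induction l with
  | nil => simp
  | cons a l ih =>
    rw [List.map_cons, List.prod_cons, ih]
    exact (Fin.prod_univ_succ (f := fun i : Fin (l.length+1) => f ((a :: l).get i))).symm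

lemma shapeEq_size {a b : PTree} (h : ShapeEq a b) : size a = size b := by
  induction h with
  | @node l₁ l₂ e h IH =>
    rw [size_node, size_node, map_sum_get, map_sum_get]
    congr 1
    rw [Finset.sum_congr rfl (fun i _ => IH i)]
    exact Equiv.sum_comp e (fun j => size (l₂.get j))

lemma shapeEq_tfact {a b : PTree} (h : ShapeEq a b) : tfact a = tfact b := by
  induction h with
  | @node l₁ l₂ e h IH =>
    have hs : size (node l₁) = size (node l₂) := shapeEq_size (ShapeEq.node e h)
    rw [tfact_node, tfact_node, hs, map_prod_get, map_prod_get]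
    congr 1
    rw [Finset.prod_congr rfl (fun i _ => IH i)]
    exact Equiv.prod_comp e (fun j => tfact (l₂.get j))

variable {n : ℕ} {p : Fin n → Fin n}

/-- the list of children used by `shapeAux` -/
def cl (p : Fin n → Fin n) (i : Fin n) : List (Fin n) :=
  (List.finRange n).filter (fun j => decide (p j = i ∧ i < j))

lemma cl_nodup (p : Fin n → Fin n) (i : Fin n) : (cl p i).Nodup :=
  (List.nodup_finRange n).filter _

lemma cl_toFinset (p : Fin n → Fin n) (i : Fin n) : (cl p i).toFinset = children p i := by
  ext c
  rw [List.mem_toFinset, cl, List.mem_filter, mem_children]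
  simp only [List.mem_finRange, true_and, decide_eq_true_eq, Fin.lt_def]

lemma descF_root_univ (hp : Good p) (hn : 0 < n) : descF p ⟨0, hn⟩ = Finset.univ := by
  ext j
  simp [mem_descF, desc_root hp (show ((⟨0, hn⟩ : Fin n) : ℕ) = 0 from rfl) j]

lemma shapeAux_spec (hp : Good p) :
    ∀ fuel (i : Fin n), n ≤ fuel + (i : ℕ) + 1 →
      size (shapeAux n p fuel i) = sN p i ∧
      tfact (shapeAux n p fuel i) = ∏ j ∈ descF p i, sN p j := by
  intro fuel
  induction fuel with
  | zero =>
    intro i hi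
    have hdesc : descF p i = {i} := by
      ext j
      simp only [mem_descF, Finset.mem_singleton]
      constructor
      · intro h
        have h1 := h.le hp
        have h2 := j.isLt
        exact Fin.ext (by omega)
      · rintro rfl
        exact desc_refl j
    have hs : sN p i = 1 := by rw [sN, hdesc, Finset.card_singleton]
    have h0 : shapeAux n p 0 i = node [] := rfl
    refine ⟨?_, ?_⟩
    · rw [h0, size_node, hs]; rfl
    · rw [h0, tfact_node, size_node, hdesc, Finset.prod_singleton, hs]; rfl
  | succ fuel IH =>
    intro i hi
    have hch : ∀ c ∈ children p i, n ≤ fuel + (c : ℕ) + 1 := by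
      intro c hc
      have := (mem_children.1 hc).2
      omega
    have hsh : shapeAux n p (fuel+1) i = node ((cl p i).map (shapeAux n p fuel)) := rfl
    have hsize : size (shapeAux n p (fuel+1) i) = sN p i := by
      rw [hsh, size_node, List.map_map, ← List.sum_toFinset _ (cl_nodup p i), cl_toFinset]
      have hcongr : (children p i).sum (size ∘ shapeAux n p fuel) = ∑ c ∈ children p i, sN p c :=
        Finset.sum_congr rfl (fun c hc => (IH c (hch c hc)).1)
      rw [hcongr]
      exact (sN_eq hp i).symm
    refine ⟨hsize, ?_⟩
    rw [hsh, tfact_node, ← hsh, hsize, List.map_map, ← List.prod_toFinset _ (cl_nodup p i),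
      cl_toFinset]
    have hcongr : (children p i).prod (tfact ∘ shapeAux n p fuel) =
        ∏ c ∈ children p i, ∏ j ∈ descF p c, sN p j :=
      Finset.prod_congr rfl (fun c hc => (IH c (hch c hc)).2)
    rw [hcongr, prod_descF hp i]

lemma size_shapeOf (hp : Good p) (hn : 0 < n) : size (shapeOf p) = n := by
  rw [shapeOf, dif_pos hn, (shapeAux_spec hp n ⟨0, hn⟩ (by omega)).1, sN,
    descF_root_univ hp hn, Finset.card_univ, Fintype.card_fin]

lemma tfact_shapeOf (hp : Good p) (hn : 0 < n) : (tfact (shapeOf p) : ℝ) = Wr p := by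
  rw [shapeOf, dif_pos hn, (shapeAux_spec hp n ⟨0, hn⟩ (by omega)).2, descF_root_univ hp hn, Wr]
  push_cast
  rfl

lemma alpha_eq (t : PTree) :
    alpha t = ((Q t.size).filter (fun p => ShapeEq (shapeOf p) t)).card := by
  classical
  rw [alpha, Nat.card_eq_fintype_card, Fintype.card_subtype]
  apply congrArg Finset.card
  ext p
  simp only [Finset.mem_filter, Finset.mem_univ, true_and, Q, Good]
  constructor
  · rintro ⟨h0, h1, h2⟩
    refine ⟨⟨fun j hj => ?_, h1⟩, h2⟩
    have hj' : j = ⟨0, t.size_pos⟩ := Fin.ext hj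
    rw [hj', h0]
  · rintro ⟨⟨h0, h1⟩, h2⟩
    exact ⟨h0 _ rfl, h1, h2⟩

end AlphaAux

open PTree in
/-- For every `n ≥ 1`, `∑_{t∈ℛₙ} α(t)/t! = (n−1)!/2^{n−1}`, the sum being
over a set `R` of representatives of the rooted trees with `n` nodes. -/
theorem sum_alpha_div_tfact (n : ℕ) (hn : 1 ≤ n)
    (R : Finset PTree) (hR : IsTransversal n R) :
    ∑ t ∈ R, (alpha t : ℝ) / (tfact t : ℝ) =
      (Nat.factorial (n - 1) : ℝ) / 2 ^ (n - 1) := by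
  classical
  obtain ⟨hRsize, hRuniq⟩ := hR
  have hn0 : 0 < n := hn
  have hstep : ∀ t ∈ R, (alpha t : ℝ) / (tfact t : ℝ) =
      ∑ p ∈ AlphaAux.Q n, if ShapeEq (shapeOf p) t then 1 / AlphaAux.Wr p else 0 := by
    intro t ht
    have hts : t.size = n := hRsize t ht
    have h2 : (alpha t : ℝ) / (tfact t : ℝ) =
        ∑ p ∈ (AlphaAux.Q n).filter (fun p => ShapeEq (shapeOf p) t), 1 / (tfact t : ℝ) := by
      rw [Finset.sum_const, nsmul_eq_mul, AlphaAux.alpha_eq t, hts]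
      ring
    rw [h2]
    have h3 : ∀ p ∈ (AlphaAux.Q n).filter (fun p => ShapeEq (shapeOf p) t),
        (1 : ℝ) / (tfact t : ℝ) = 1 / AlphaAux.Wr p := by
      intro p hp
      obtain ⟨hpQ, hpS⟩ := Finset.mem_filter.1 hp
      have hgood := AlphaAux.mem_Q.1 hpQ
      rw [← AlphaAux.shapeEq_tfact hpS, AlphaAux.tfact_shapeOf hgood hn0]
    rw [Finset.sum_congr rfl h3, Finset.sum_filter]
  rw [Finset.sum_congr rfl hstep, Finset.sum_comm]
  have hfiber : ∀ p ∈ AlphaAux.Q n,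
      (∑ t ∈ R, if ShapeEq (shapeOf p) t then 1 / AlphaAux.Wr p else 0)
        = 1 / AlphaAux.Wr p := by
    intro p hp
    have hgood := AlphaAux.mem_Q.1 hp
    obtain ⟨u, ⟨huR, huS⟩, huniq⟩ := hRuniq (shapeOf p) (AlphaAux.size_shapeOf hgood hn0)
    rw [Finset.sum_eq_single u]
    · rw [if_pos huS]
    · intro t htR htne
      rw [if_neg (fun hS => htne (huniq t ⟨htR, hS⟩))]
    · intro hu
      exact absurd huR hu
  rw [Finset.sum_congr rfl hfiber]
  exact AlphaAux.Scount n hn0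
end

section
/- For every integer n ≥ 1, ∑_{t∈ℱ_n} 1/t! = (2n−2)!/(2^{n−1}·n!·(n−1)!), where the sum is over all rooted plane trees with n nodes; equivalently, the generating function ∑_{t∈ℱ} z^{|t|}/t! over all rooted plane trees equals 1 − √(1−2z). -/
open scoped Classical

namespace PTree

lemma size_node (l : List PTree) : size (node l) = 1 + (l.map size).sum := by
  rw [size, List.attach_map_val]

lemma tfact_node (l : List PTree) :
    tfact (node l) = (1 + (l.map size).sum) * (l.map tfact).prod := by
  rw [tfact, List.attach_map_val, size_node]

lemma finite_size_le : ∀ n : ℕ, {t : PTree | size t ≤ n}.Finite := by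
  intro n
  induction n with
  | zero =>
    convert Set.finite_empty
    ext t; simp only [Set.mem_setOf_eq, Set.mem_empty_iff_false, iff_false, Nat.le_zero]
    exact t.size_pos.ne'
  | succ n ih =>
    have : Finite {t : PTree // size t ≤ n} := ih
    have hL : {l : List {t : PTree // size t ≤ n} | l.length ≤ n + 1}.Finite :=
      List.finite_length_le _ (n+1)
    have himg := (hL.image (fun l => node (l.map Subtype.val)))
    refine himg.subset ?_
    rintro ⟨l⟩ hl
    simp only [Set.mem_setOf_eq, size_node] at hl
    have hall : ∀ t ∈ l, size t ≤ n := by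
      intro t ht
      have h1 : size t ≤ (l.map size).sum := List.le_sum_of_mem (List.mem_map_of_mem (f := size) ht)
      omega
    have hlen : l.length ≤ n + 1 := by
      have h2 : (l.map size).length ≤ (l.map size).sum :=
        List.length_le_sum_of_one_le _ (by rintro i hi; simp only [List.mem_map] at hi
                                           obtain ⟨t, _, rfl⟩ := hi; exact t.size_pos)
      simp only [List.length_map] at h2; omega
    refine ⟨l.attach.map (fun c => ⟨c.1, hall c.1 c.2⟩), by simpa using hlen, ?_⟩
    simp [List.map_map, List.attach_map_val]


lemma finite_tree (n : ℕ) : {t : PTree | size t = n}.Finite :=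
  (finite_size_le n).subset (fun t ht => le_of_eq ht)

lemma finite_forest (m : ℕ) : {l : List PTree | (l.map size).sum = m}.Finite := by
  have : Finite {t : PTree // size t ≤ m} := finite_size_le m
  have hL : {l : List {t : PTree // size t ≤ m} | l.length ≤ m}.Finite :=
    List.finite_length_le _ m
  refine (hL.image (fun l => l.map Subtype.val)).subset ?_
  intro l hl
  simp only [Set.mem_setOf_eq] at hl
  have hall : ∀ t ∈ l, size t ≤ m := by
    intro t ht
    have h1 : size t ≤ (l.map size).sum := List.le_sum_of_mem (List.mem_map_of_mem (f := size) ht)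
    omega
  have hlen : l.length ≤ m := by
    have h2 : (l.map size).length ≤ (l.map size).sum :=
      List.length_le_sum_of_one_le _ (by rintro i hi; simp only [List.mem_map] at hi
                                         obtain ⟨t, _, rfl⟩ := hi; exact t.size_pos)
    simp only [List.length_map] at h2; omega
  refine ⟨l.attach.map (fun c => ⟨c.1, hall c.1 c.2⟩), by simpa using hlen, ?_⟩
  simp [List.map_map, List.attach_map_val]

/-- Finset of all plane trees of size `n`. -/
noncomputable def TF (n : ℕ) : Finset PTree := (finite_tree n).toFinset
/-- Finset of all forests of total size `m`. -/
noncomputable def FF (m : ℕ) : Finset (List PTree) := (finite_forest m).toFinset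

lemma mem_TF {n : ℕ} {t : PTree} : t ∈ TF n ↔ size t = n := by
  simp [TF, Set.Finite.mem_toFinset]

lemma mem_FF {m : ℕ} {l : List PTree} : l ∈ FF m ↔ (l.map size).sum = m := by
  simp [FF, Set.Finite.mem_toFinset]

/-- weighted count of trees of size n -/
noncomputable def S (n : ℕ) : ℝ := ∑ t ∈ TF n, 1 / (tfact t : ℝ)
/-- weighted count of forests of total size m -/
noncomputable def G (m : ℕ) : ℝ := ∑ l ∈ FF m, (l.map (fun t => 1 / (tfact t : ℝ))).prod

lemma G_zero : G 0 = 1 := by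
  have : FF 0 = {[]} := by
    ext l; simp only [mem_FF, Finset.mem_singleton]
    constructor
    · intro h
      rcases l with _ | ⟨t, l⟩
      · rfl
      · exfalso; simp only [List.map_cons, List.sum_cons] at h
        have := t.size_pos; omega
    · rintro rfl; simp
  simp [G, this]

lemma tfact_pos (t : PTree) : 0 < tfact t := by
  suffices h : ∀ n (t : PTree), size t ≤ n → 0 < tfact t from h (size t) t le_rfl
  intro n
  induction n with
  | zero => intro t ht; exact absurd ht (by simpa using t.size_pos.ne')
  | succ n ih =>
      rintro ⟨l⟩ ht
      rw [size_node] at ht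
      rw [tfact_node]
      refine Nat.mul_pos (by omega) (List.prod_pos ?_)
      intro x hx
      simp only [List.mem_map] at hx
      obtain ⟨c, hc, rfl⟩ := hx
      refine ih c ?_
      have := List.le_sum_of_mem (List.mem_map_of_mem (f := size) hc)
      omega

lemma prod_inv_tfact (l : List PTree) :
    (l.map (fun t => 1 / (tfact t : ℝ))).prod = 1 / ((l.map tfact).prod : ℝ) := by
  induction l with
  | nil => simp
  | cons t l ih =>
      simp only [List.map_cons, List.prod_cons, ih, Nat.cast_mul]
      rw [div_mul_div_comm, one_mul]

lemma lemA {n : ℕ} (hn : 1 ≤ n) : (n : ℝ) * S n = G (n - 1) := by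
  have hTF : TF n = (FF (n - 1)).image node := by
    ext t
    simp only [mem_TF, Finset.mem_image]
    constructor
    · rintro rfl
      rcases t with ⟨l⟩
      exact ⟨l, by rw [mem_FF, size_node] at *; omega, rfl⟩
    · rintro ⟨l, hl, rfl⟩
      rw [mem_FF] at hl; rw [size_node]; omega
  rw [S, hTF, Finset.sum_image (by rintro x _ y _ h; injection h)]
  rw [G, Finset.mul_sum]
  refine Finset.sum_congr rfl (fun l hl => ?_)
  rw [mem_FF] at hl
  have hsz : size (node l) = n := by rw [size_node]; omega
  rw [tfact_node, ← size_node, hsz]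
  rw [prod_inv_tfact, Nat.cast_mul]
  have h1 : (n : ℝ) ≠ 0 := by positivity
  have h2 : ((l.map tfact).prod : ℝ) ≠ 0 := by
    refine Nat.cast_ne_zero.mpr (List.prod_pos ?_).ne'
    intro x hx
    simp only [List.mem_map] at hx
    obtain ⟨c, _, rfl⟩ := hx
    exact c.tfact_pos
  rw [mul_one_div, div_eq_div_iff (mul_ne_zero h1 h2) h2]
  ring

lemma lemB {m : ℕ} (hm : 1 ≤ m) : G m = ∑ k ∈ Finset.Icc 1 m, S k * G (m - k) := by
  have hFF : FF m = (Finset.Icc 1 m).biUnion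
      (fun k => ((TF k) ×ˢ FF (m - k)).image (fun p => p.1 :: p.2)) := by
    ext l
    simp only [mem_FF, mem_TF, Finset.mem_biUnion, Finset.mem_Icc, Finset.mem_image,
      Finset.mem_product, Prod.exists]
    constructor
    · intro h
      rcases l with _ | ⟨t, l'⟩
      · exfalso; simp only [List.map_nil, List.sum_nil] at h; omega
      · simp only [List.map_cons, List.sum_cons] at h
        refine ⟨size t, ⟨t.size_pos, by omega⟩, t, l', ⟨rfl, by omega⟩, rfl⟩
    · rintro ⟨k, ⟨hk1, hk2⟩, t, l', ⟨ht, hl'⟩, rfl⟩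
      simp only [List.map_cons, List.sum_cons]; omega
  have hdisj : (↑(Finset.Icc 1 m) : Set ℕ).PairwiseDisjoint
      (fun k => ((TF k) ×ˢ FF (m - k)).image (fun p : PTree × List PTree => p.1 :: p.2)) := by
    intro k _ k' _ hne
    simp only [Function.onFun]
    rw [Finset.disjoint_left]
    rintro x hx hx'
    simp only [Finset.mem_image, Finset.mem_product, Prod.exists] at hx hx'
    obtain ⟨t, l', ⟨ht, _⟩, rfl⟩ := hx
    obtain ⟨u, l'', ⟨hu, _⟩, heq⟩ := hx'
    have h1 : u = t := by injection heq
    rw [mem_TF] at ht hu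
    exact hne (by rw [← ht, ← h1, hu])
  rw [G, hFF, Finset.sum_biUnion hdisj]
  refine Finset.sum_congr rfl fun k hk => ?_
  rw [Finset.sum_image (by rintro ⟨a, b⟩ _ ⟨c, d⟩ _ h
                           injection h with h1 h2; exact Prod.ext h1 h2)]
  rw [S, G, Finset.sum_mul_sum, ← Finset.sum_product']
  refine Finset.sum_congr rfl fun p hp => ?_
  simp [mul_comm]

lemma cat_conv {n : ℕ} (hn : 2 ≤ n) :
    ∑ k ∈ Finset.Icc 1 (n-1), catalan (k-1) * catalan (n-k-1) = catalan (n-1) := by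
  have h : n - 1 = (n - 2) + 1 := by omega
  rw [h, catalan_succ']
  refine Finset.sum_nbij' (fun k => (k - 1, n - 1 - k)) (fun p => p.1 + 1)
    ?_ ?_ ?_ ?_ ?_
  · intro k hk; simp only [Finset.mem_Icc] at hk
    simp only [Finset.HasAntidiagonal.mem_antidiagonal]; (try dsimp only); omega
  · intro p hp; simp only [Finset.HasAntidiagonal.mem_antidiagonal] at hp
    simp only [Finset.mem_Icc]; (try dsimp only); omega
  · intro k hk; simp only [Finset.mem_Icc] at hk; (try dsimp only); omega
  · rintro ⟨i, j⟩ hp; simp only [Finset.HasAntidiagonal.mem_antidiagonal] at hp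
    (try dsimp only); simp only [Prod.mk.injEq]; omega
  · intro k hk; simp only [Finset.mem_Icc] at hk
    (try dsimp only); congr 2 <;> omega

lemma cat_sym {n : ℕ} (hn : 2 ≤ n) :
    2 * ∑ k ∈ Finset.Icc 1 (n-1), (n-k) * (catalan (k-1) * catalan (n-k-1))
      = n * catalan (n-1) := by
  have hrefl : ∑ k ∈ Finset.Icc 1 (n-1), (n-k) * (catalan (k-1) * catalan (n-k-1))
      = ∑ k ∈ Finset.Icc 1 (n-1), k * (catalan (k-1) * catalan (n-k-1)) := by
    refine Finset.sum_nbij' (fun k => n - k) (fun k => n - k) ?_ ?_ ?_ ?_ ?_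
    · intro k hk; simp only [Finset.mem_Icc] at *; (try dsimp only); omega
    · intro k hk; simp only [Finset.mem_Icc] at *; (try dsimp only); omega
    · intro k hk; simp only [Finset.mem_Icc] at hk; (try dsimp only); omega
    · intro k hk; simp only [Finset.mem_Icc] at hk; (try dsimp only); omega
    · intro k hk; simp only [Finset.mem_Icc] at hk
      have h2 : n - (n - k) - 1 = k - 1 := by omega
      simp only [h2]
      rw [mul_comm (catalan (k-1))]
  rw [two_mul]
  nth_rewrite 1 [hrefl]
  rw [← Finset.sum_add_distrib, ← cat_conv hn, Finset.mul_sum]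
  refine Finset.sum_congr rfl fun k hk => ?_
  simp only [Finset.mem_Icc] at hk
  rw [← add_mul]
  congr 1
  omega

lemma S_closed : ∀ n, 1 ≤ n → S n = (catalan (n-1) : ℝ) / 2^(n-1) := by
  intro n
  induction n using Nat.strong_induction_on with
  | _ n ih =>
    intro hn
    by_cases hn1 : n = 1
    · subst hn1
      have hA := lemA le_rfl
      rw [G_zero] at hA
      simp only [Nat.sub_self, catalan_zero, Nat.cast_one, pow_zero, div_one]
      simpa using hA
    · have hn2 : 2 ≤ n := by omega
      have hA := lemA hn
      rw [lemB (by omega : 1 ≤ n - 1)] at hA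
      have hterm : ∀ k ∈ Finset.Icc 1 (n-1), S k * G (n-1-k)
          = (((n-k) * (catalan (k-1) * catalan (n-k-1)) : ℕ) : ℝ) / 2^(n-2) := by
        intro k hk
        simp only [Finset.mem_Icc] at hk
        have e1 : n - 1 - k = (n - k) - 1 := by omega
        have hGk : G (n-1-k) = ((n-k : ℕ) : ℝ) * S (n-k) := by
          rw [e1, ← lemA (by omega)]
        rw [hGk, ih k (by omega) (by omega), ih (n-k) (by omega) (by omega)]
        have hp : (2:ℝ)^(k-1) * 2^(n-k-1) = 2^(n-2) := by
          rw [← pow_add]; congr 1; omega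
        push_cast
        rw [← hp]
        field_simp
      rw [Finset.sum_congr rfl hterm, ← Finset.sum_div, ← Nat.cast_sum] at hA
      have hcat := cat_sym hn2
      have hcast : ((∑ k ∈ Finset.Icc 1 (n-1),
          (n-k) * (catalan (k-1) * catalan (n-k-1)) : ℕ) : ℝ)
          = (n:ℝ) * (catalan (n-1) : ℝ) / 2 := by
        have h := congrArg (Nat.cast : ℕ → ℝ) hcat
        push_cast at h ⊢
        linarith
      rw [hcast] at hA
      have h2n : ((n:ℝ)) ≠ 0 := by positivity
      apply mul_left_cancel₀ h2n
      rw [hA]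
      have hp2 : (2:ℝ)^(n-1) = 2 * 2^(n-2) := by
        rw [← pow_succ']; congr 1; omega
      rw [hp2]
      field_simp

end PTree

open PTree in
/-- For every `n ≥ 1`, `∑_{t∈ℱₙ} 1/t! = (2n−2)!/(2^{n−1}·n!·(n−1)!)`, the sum
being over all rooted plane trees with `n` nodes. -/
theorem plane_sum_inv_tfact (n : ℕ) (hn : 1 ≤ n)
    (F : Finset PTree) (hF : ∀ t : PTree, t ∈ F ↔ size t = n) :
    ∑ t ∈ F, (1 : ℝ) / (tfact t : ℝ) =
      (Nat.factorial (2 * n - 2) : ℝ) /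
        (2 ^ (n - 1) * (Nat.factorial n : ℝ) * (Nat.factorial (n - 1) : ℝ)) := by
  have hFTF : F = TF n := by ext t; rw [hF, mem_TF]
  have hS : ∑ t ∈ F, (1 : ℝ) / (tfact t : ℝ) = S n := by rw [hFTF]; rfl
  rw [hS, S_closed n hn]
  set m := n - 1 with hmdef
  have hm : n = m + 1 := by omega
  have h1 : (m+1) * catalan m = Nat.centralBinom m := succ_mul_catalan_eq_centralBinom m
  have h2 : Nat.centralBinom m * m.factorial * m.factorial = (2*m).factorial := by
    have h := Nat.choose_mul_factorial_mul_factorial (show m ≤ 2*m by omega)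
    rw [show 2*m - m = m by omega] at h
    rw [Nat.centralBinom]
    exact h
  have hkey : catalan m * (m+1).factorial * m.factorial = (2*m).factorial := by
    rw [Nat.factorial_succ, ← h2, ← h1]; ring
  have hn2 : 2 * n - 2 = 2 * m := by omega
  rw [hn2, hm]
  have hkeyR := congrArg (Nat.cast : ℕ → ℝ) hkey
  push_cast at hkeyR
  have hfne : ((m:ℕ).factorial : ℝ) ≠ 0 := Nat.cast_ne_zero.mpr (Nat.factorial_pos m).ne'
  have hfne2 : (((m+1):ℕ).factorial : ℝ) ≠ 0 := Nat.cast_ne_zero.mpr (Nat.factorial_pos _).ne'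
  have h2ne : (2:ℝ)^m ≠ 0 := by positivity
  rw [div_eq_div_iff (by positivity) (by
    refine mul_ne_zero (mul_ne_zero h2ne hfne2) hfne)]
  push_cast
  linear_combination (2:ℝ)^m * hkeyR
end

section
/- Let β > 0 and r : ℕ → ℝ, and set B^r_k := β²·r(2k−1) for k ≥ 1. For every rooted plane tree t with |t| = k+1 ≥ 2, let σ_t be the involution of {1,…,2k} induced by the right-to-left depth-first walk (pairing the two steps at which each edge is crossed). Then ∏_{i : i < σ_t(i)} β²·r(σ_t(i) − i) = ∏_{w ≠ root of t} B^r_{|t_w|}; in particular this product equals B^r(t)/B^r_{|t|} whenever B^r_{|t|} ≠ 0, where B^r is the bare Green function with weights (B^r_k). -/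
open scoped Classical

namespace PTree

/-- the subtree of `t` rooted at the node reached by the path `p` of
child indices (left-to-right, `0`-based) -/
def subtreeAt : List ℕ → PTree → Option PTree
  | [], t => some t
  | i :: p, node l => (l[i]?).bind (subtreeAt p)

/-- The right-to-left depth-first closed walk on a plane tree, as the list of
its directed edge crossings: `(q, true)` records the downward crossing of the
edge leading to the node with path `q`, and `(q, false)` its upward crossing.
Children are explored from the right to the left. -/
def walk : PTree → List (List ℕ × Bool)
  | node l =>
      (List.range l.length).reverse.flatMap (fun i =>
        match h : l[i]? with
        | some c =>
            ([i], true) :: ((walk c).map (fun pb => (i :: pb.1, pb.2))) ++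
              [([i], false)]
        | none => [])
decreasing_by
  have hm : c ∈ l := by
    have := List.getElem?_eq_some_iff.mp h
    rcases this with ⟨hlt, rfl⟩
    exact List.getElem_mem hlt
  have := List.sizeOf_lt_of_mem hm
  simp only [node.sizeOf_spec]; omega

/-- step (counted from `1`) at which the edge to the node with path `p` is
crossed downward during the right-to-left walk -/
def sDown (t : PTree) (p : List ℕ) : ℕ := (walk t).idxOf (p, true) + 1

/-- step (counted from `1`) at which the edge to the node with path `p` is
crossed upward during the right-to-left walk -/
def sUp (t : PTree) (p : List ℕ) : ℕ := (walk t).idxOf (p, false) + 1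

end PTree

namespace PTree

lemma one_le_size (t : PTree) : 1 ≤ size t := t.size_pos

lemma attach_map_eq {β : Type} (l : List PTree) (f : PTree → β) :
    l.attach.map (fun c => f c.1) = l.map f :=
  List.attach_map_val

lemma subtreeAt_nil (t : PTree) : subtreeAt [] t = some t := rfl

lemma subtreeAt_cons (i : ℕ) (q : List ℕ) (l : List PTree) :
    subtreeAt (i :: q) (node l) = (l[i]?).bind (subtreeAt q) := rfl

/-- one block of the walk: the part corresponding to child `i` with subtree `c` -/
def wblk (i : ℕ) (c : PTree) : List (List ℕ × Bool) :=
  ([i], true) :: (((walk c).map (fun pb => (i :: pb.1, pb.2))) ++ [([i], false)])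

lemma flatMap_congr {α β : Type*} {l : List α} {f g : α → List β}
    (h : ∀ a ∈ l, f a = g a) : l.flatMap f = l.flatMap g := by
  induction l with
  | nil => rfl
  | cons a l ih =>
    simp only [List.flatMap_cons]
    rw [h a (by simp), ih (fun a ha => h a (by simp [ha]))]

lemma walk_node (l : List PTree) :
    walk (node l) =
      (List.range l.length).reverse.flatMap (fun i => wblk i (l.getD i default)) := by
  rw [walk]
  apply flatMap_congr
  intro i hi
  rw [List.mem_reverse, List.mem_range] at hi
  have h : l[i]? = some l[i] := List.getElem?_eq_getElem hi
  split
  · next c heq =>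
    rw [h] at heq
    cases heq
    simp [wblk, List.getD, h]
  · next heq =>
    rw [h] at heq
    cases heq

lemma map_range_getD {β : Type*} (l : List PTree) (f : PTree → β) :
    (List.range l.length).map (fun i => f (l.getD i default)) = l.map f := by
  apply List.ext_getElem
  · simp
  · intro n h1 h2
    simp only [List.getElem_map, List.getElem_range]
    congr 1
    exact List.getD_eq_getElem l default (by simpa using h2)

lemma length_wblk (i : ℕ) (c : PTree) : (wblk i c).length = 2 + (walk c).length := by
  simp [wblk]; omega

lemma sum_map_two_mul (l : List PTree) :
    (l.map (fun c => 2 * size c)).sum = 2 * (l.map size).sum := by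
  induction l with
  | nil => simp
  | cons a l ih => simp [ih, Nat.mul_add]

theorem length_walk : ∀ (t : PTree), (walk t).length = 2 * (size t - 1)
  | node l => by
    have IH : ∀ c ∈ l, (walk c).length = 2 * (size c - 1) := fun c hc => length_walk c
    rw [walk_node, List.length_flatMap, List.map_reverse, List.sum_reverse]
    have h1 : (List.range l.length).map
          (List.length ∘ fun i => wblk i (l.getD i default))
        = (List.range l.length).map (fun i => (fun c => 2 * size c) (l.getD i default)) := by
      apply List.map_congr_left
      intro i hi
      rw [List.mem_range] at hi
      have hm : l.getD i default ∈ l := by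
        rw [List.getD_eq_getElem _ _ hi]; exact List.getElem_mem hi
      have hs := size_pos (l.getD i default)
      simp only [Function.comp_apply, length_wblk, IH _ hm]
      omega
    rw [Function.comp_def] at h1
    rw [h1, map_range_getD l (fun c => 2 * size c), sum_map_two_mul, size_node]
    have hs : ∀ c ∈ l, 1 ≤ size c := fun c _ => one_le_size c
    omega
decreasing_by
  have := List.sizeOf_lt_of_mem hc
  simp only [node.sizeOf_spec]; omega

lemma mem_wblk {x : List ℕ × Bool} {i : ℕ} {c : PTree} :
    x ∈ wblk i c ↔ x.1 = [i] ∨ ∃ q, x.1 = i :: q ∧ (q, x.2) ∈ walk c := by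
  rw [wblk]
  constructor
  · intro hx
    rcases List.mem_cons.mp hx with h | hx
    · exact Or.inl (congrArg Prod.fst h)
    · rcases List.mem_append.mp hx with h | h
      · obtain ⟨pb, hpb, he⟩ := List.mem_map.mp h
        refine Or.inr ⟨pb.1, ?_, ?_⟩
        · rw [← he]
        · rw [← he]
          exact hpb
      · have h' : x = ([i], false) := List.mem_singleton.mp h
        exact Or.inl (congrArg Prod.fst h')
  · intro hx
    obtain ⟨p, b⟩ := x
    rcases hx with h | ⟨q, h1, h2⟩
    · have h' : p = [i] := h
      subst h'
      cases b
      · exact List.mem_cons.mpr (Or.inr (List.mem_append.mpr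
          (Or.inr (List.mem_singleton.mpr rfl))))
      · exact List.mem_cons.mpr (Or.inl rfl)
    · have h1' : p = i :: q := h1
      have h2' : (q, b) ∈ walk c := h2
      subst h1'
      exact List.mem_cons.mpr (Or.inr (List.mem_append.mpr (Or.inl
        (List.mem_map.mpr ⟨(q, b), h2', rfl⟩))))

theorem mem_walk : ∀ (t : PTree) (p : List ℕ) (b : Bool),
    ((p, b) ∈ walk t ↔ p ≠ [] ∧ (subtreeAt p t).isSome)
  | node l, p, b => by
    have IH : ∀ c ∈ l, ∀ p b, ((p, b) ∈ walk c ↔ p ≠ [] ∧ (subtreeAt p c).isSome) :=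
      fun c hc => mem_walk c
    rw [walk_node]
    simp only [List.mem_flatMap, List.mem_reverse, List.mem_range]
    constructor
    · rintro ⟨i, hi, hx⟩
      have hgd : l.getD i default = l[i] := List.getD_eq_getElem _ _ hi
      have hli : l[i]? = some l[i] := List.getElem?_eq_getElem hi
      rcases mem_wblk.mp hx with h | ⟨q, h1, h2⟩
      · have h' : p = [i] := h
        refine ⟨by simp [h'], ?_⟩
        rw [h', subtreeAt_cons, hli]
        simp [subtreeAt_nil]
      · have h1' : p = i :: q := h1
        have h2' : (q, b) ∈ walk (l.getD i default) := h2
        rw [hgd] at h2'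
        have hmem : l[i] ∈ l := List.getElem_mem hi
        obtain ⟨hq, hs⟩ := (IH _ hmem q b).mp h2'
        refine ⟨by simp [h1'], ?_⟩
        rw [h1', subtreeAt_cons, hli]
        simpa using hs
    · rintro ⟨hp, hs⟩
      cases p with
      | nil => exact absurd rfl hp
      | cons i q =>
        rw [subtreeAt_cons] at hs
        have hi : i < l.length := by
          rcases hli : l[i]? with _ | c
          · rw [hli] at hs; simp at hs
          · exact (List.getElem?_eq_some_iff.mp hli).1
        have hli : l[i]? = some l[i] := List.getElem?_eq_getElem hi
        rw [hli] at hs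
        simp only [Option.bind_some] at hs
        have hgd : l.getD i default = l[i] := List.getD_eq_getElem _ _ hi
        refine ⟨i, hi, ?_⟩
        cases q with
        | nil => exact mem_wblk.mpr (Or.inl rfl)
        | cons j q' =>
          refine mem_wblk.mpr (Or.inr ⟨j :: q', rfl, ?_⟩)
          rw [hgd]
          exact (IH _ (List.getElem_mem hi) _ b).mpr ⟨by simp, hs⟩
decreasing_by
  have := List.sizeOf_lt_of_mem hc
  simp only [node.sizeOf_spec]; omega

lemma headI_of_mem_wblk {x : List ℕ × Bool} {i : ℕ} {c : PTree} (h : x ∈ wblk i c) :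
    x.1.headI = i := by
  rcases mem_wblk.mp h with h | ⟨q, h, _⟩ <;> simp [h]

lemma fst_ne_nil_of_mem_walk {x : List ℕ × Bool} {t : PTree} (h : x ∈ walk t) :
    x.1 ≠ [] := by
  have : (x.1, x.2) ∈ walk t := by simpa using h
  exact ((mem_walk t x.1 x.2).mp this).1

lemma nodup_wblk {i : ℕ} {c : PTree} (hc : (walk c).Nodup) : (wblk i c).Nodup := by
  have hinj : Function.Injective (fun pb : List ℕ × Bool => (i :: pb.1, pb.2)) := by
    rintro ⟨a1, a2⟩ ⟨b1, b2⟩ h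
    simp only [Prod.mk.injEq, List.cons.injEq, true_and] at h
    simp [h.1, h.2]
  have hnotmem : ∀ b : Bool, ([i], b) ∉ (walk c).map (fun pb => (i :: pb.1, pb.2)) := by
    intro b hb
    rw [List.mem_map] at hb
    obtain ⟨pb, hpb, he⟩ := hb
    apply fst_ne_nil_of_mem_walk hpb
    have h4 := congrArg (fun z : List ℕ × Bool => z.1) he
    simpa using h4
  rw [wblk, List.nodup_cons, List.nodup_append]
  refine ⟨?_, hc.map hinj, by simp, ?_⟩
  · rw [List.mem_append]
    rintro (h | h)
    · exact hnotmem true h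
    · simp at h
  · intro x hx y hx2 hxy
    subst hxy
    simp only [List.mem_singleton] at hx2
    subst hx2
    exact hnotmem false hx

lemma nodup_flatMap_key {α : Type*} (key : α → ℕ) :
    ∀ (L : List ℕ), L.Nodup → ∀ (f : ℕ → List α),
    (∀ i ∈ L, (f i).Nodup) → (∀ i ∈ L, ∀ x ∈ f i, key x = i) →
    (L.flatMap f).Nodup := by
  intro L
  induction L with
  | nil => intros; simp
  | cons a L ih =>
    intro hL f hn hk
    simp only [List.flatMap_cons]
    rw [List.nodup_append]
    refine ⟨hn a (by simp), ih hL.of_cons f (fun i hi => hn i (by simp [hi]))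
      (fun i hi => hk i (by simp [hi])), ?_⟩
    intro x hxa y hxL hxy
    subst hxy
    rw [List.mem_flatMap] at hxL
    obtain ⟨j, hj, hxj⟩ := hxL
    have h1 := hk a (by simp) x hxa
    have h2 := hk j (by simp [hj]) x hxj
    have haL : a ∉ L := (List.nodup_cons.mp hL).1
    exact haL ((h1.symm.trans h2) ▸ hj)

theorem nodup_walk : ∀ (t : PTree), (walk t).Nodup
  | node l => by
    have IH : ∀ c ∈ l, (walk c).Nodup := fun c hc => nodup_walk c
    rw [walk_node]
    apply nodup_flatMap_key (fun x => x.1.headI)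
    · exact List.nodup_reverse.mpr List.nodup_range
    · intro i hi
      rw [List.mem_reverse, List.mem_range] at hi
      apply nodup_wblk
      apply IH
      rw [List.getD_eq_getElem _ _ hi]
      exact List.getElem_mem hi
    · intro i _ x hx
      exact headI_of_mem_wblk hx
decreasing_by
  have := List.sizeOf_lt_of_mem hc
  simp only [node.sizeOf_spec]; omega

section IndexOf

variable {α : Type*} [BEq α] [LawfulBEq α]

lemma pidx_cons_self (a : α) (l : List α) : (a :: l).idxOf a = 0 := by
  rw [List.idxOf_cons, beq_self_eq_true, cond_true]

lemma pidx_cons_ne {a b : α} (l : List α) (h : b ≠ a) :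
    (b :: l).idxOf a = l.idxOf a + 1 := by
  rw [List.idxOf_cons, beq_eq_false_iff_ne.mpr h, cond_false]

lemma mem_of_mem_cons_ne {a b : α} {l : List α} (h : a ∈ b :: l) (hne : b ≠ a) :
    a ∈ l := by
  rcases List.mem_cons.mp h with h | h
  · exact absurd h.symm hne
  · exact h

lemma pidx_append_of_mem {a : α} : ∀ {l₁ : List α} (l₂ : List α), a ∈ l₁ →
    (l₁ ++ l₂).idxOf a = l₁.idxOf a
  | [], _, h => absurd h (by simp)
  | b :: l₁, l₂, h => by
    by_cases hba : b = a
    · subst hba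
      rw [List.cons_append, pidx_cons_self, pidx_cons_self]
    · rw [List.cons_append, pidx_cons_ne _ hba, pidx_cons_ne _ hba,
        pidx_append_of_mem l₂ (mem_of_mem_cons_ne h hba)]

lemma pidx_append_of_not_mem {a : α} : ∀ {l₁ : List α} (l₂ : List α), a ∉ l₁ →
    (l₁ ++ l₂).idxOf a = l₁.length + l₂.idxOf a
  | [], _, _ => by simp
  | b :: l₁, l₂, h => by
    have hba : b ≠ a := fun hh => h (by simp [hh])
    have h1 : a ∉ l₁ := fun hh => h (by simp [hh])
    rw [List.cons_append, pidx_cons_ne _ hba, pidx_append_of_not_mem l₂ h1,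
      List.length_cons]
    omega

lemma pidx_lt_length {a : α} : ∀ {l : List α}, a ∈ l → l.idxOf a < l.length
  | [], h => absurd h (by simp)
  | b :: l, h => by
    by_cases hba : b = a
    · subst hba
      rw [pidx_cons_self]
      simp
    · rw [pidx_cons_ne _ hba, List.length_cons]
      exact Nat.succ_lt_succ (pidx_lt_length (mem_of_mem_cons_ne h hba))

lemma pidx_getElem_indexOf : ∀ {l : List α}, l.Nodup → ∀ (i : ℕ) (h : i < l.length),
    l.idxOf l[i] = i
  | [], _, i, h => absurd h (by simp)
  | b :: l, hnd, 0, h => by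
    simp only [List.getElem_cons_zero]
    exact pidx_cons_self b l
  | b :: l, hnd, i + 1, h => by
    have h' : i < l.length := by simpa using h
    have hb : b ∉ l := (List.nodup_cons.mp hnd).1
    have hne : b ≠ l[i] := fun hh => hb (hh ▸ List.getElem_mem h')
    simp only [List.getElem_cons_succ]
    rw [pidx_cons_ne _ hne, pidx_getElem_indexOf (List.nodup_cons.mp hnd).2 i h']

lemma pidx_inj : ∀ {l : List α} {x y : α}, x ∈ l → y ∈ l →
    l.idxOf x = l.idxOf y → x = y
  | [], x, y, hx, _, _ => absurd hx (by simp)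
  | c :: l, x, y, hx, hy, he => by
    by_cases hcx : c = x <;> by_cases hcy : c = y
    · rw [← hcx, ← hcy]
    · rw [← hcx] at he ⊢
      rw [pidx_cons_self, pidx_cons_ne _ hcy] at he
      omega
    · rw [← hcy] at he ⊢
      rw [pidx_cons_self, pidx_cons_ne _ hcx] at he
      omega
    · rw [pidx_cons_ne _ hcx, pidx_cons_ne _ hcy] at he
      exact pidx_inj (mem_of_mem_cons_ne hx hcx) (mem_of_mem_cons_ne hy hcy)
        (by omega)

lemma indexOf_map_inj {β : Type*} [BEq β] [LawfulBEq β] {f : α → β}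
    (hf : Function.Injective f) : ∀ (l : List α) (a : α),
    (l.map f).idxOf (f a) = l.idxOf a
  | [], a => rfl
  | x :: l, a => by
    by_cases h : x = a
    · subst h
      rw [List.map_cons, pidx_cons_self, pidx_cons_self]
    · rw [List.map_cons, pidx_cons_ne _ (fun hh => h (hf hh)),
        pidx_cons_ne _ h, indexOf_map_inj hf l a]

end IndexOf

lemma indexOf_wblk_true (i : ℕ) (c : PTree) :
    (wblk i c).idxOf (([i], true)) = 0 := by
  rw [wblk]
  exact pidx_cons_self _ _

lemma indexOf_wblk_false (i : ℕ) (c : PTree) :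
    (wblk i c).idxOf (([i], false)) = (walk c).length + 1 := by
  have hnotmem : (([i], false) : List ℕ × Bool) ∉
      (walk c).map (fun pb => (i :: pb.1, pb.2)) := by
    intro hb
    rw [List.mem_map] at hb
    obtain ⟨pb, hpb, he⟩ := hb
    apply fst_ne_nil_of_mem_walk hpb
    have h4 := congrArg (fun z : List ℕ × Bool => z.1) he
    simpa using h4
  rw [wblk, pidx_cons_ne _ (by simp : (([i], true) : List ℕ × Bool) ≠ ([i], false)),
    pidx_append_of_not_mem _ hnotmem, pidx_cons_self, List.length_map]

lemma indexOf_wblk_deep (i : ℕ) (c : PTree) (q : List ℕ) (b : Bool)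
    (hq : (q, b) ∈ walk c) :
    (wblk i c).idxOf ((i :: q, b)) = (walk c).idxOf ((q, b)) + 1 := by
  have hqne : q ≠ [] := ((mem_walk c q b).mp hq).1
  have hne : (([i], true) : List ℕ × Bool) ≠ (i :: q, b) := by
    intro h
    apply hqne
    injection h with h1 h2
    injection h1 with h3 h4
    exact h4.symm
  have hmem : ((i :: q, b) : List ℕ × Bool) ∈ (walk c).map (fun pb => (i :: pb.1, pb.2)) :=
    List.mem_map.mpr ⟨(q, b), hq, rfl⟩
  have hinj : Function.Injective (fun pb : List ℕ × Bool => (i :: pb.1, pb.2)) := by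
    rintro ⟨a1, a2⟩ ⟨b1, b2⟩ h
    simp only [Prod.mk.injEq, List.cons.injEq, true_and] at h
    simp [h.1, h.2]
  rw [wblk, pidx_cons_ne _ hne, pidx_append_of_mem _ hmem]
  have := indexOf_map_inj hinj (walk c) (q, b)
  simp only at this
  rw [this]

lemma indexOf_flatMap_offset {α : Type*} [BEq α] [LawfulBEq α] (key : α → ℕ) :
    ∀ (L : List ℕ) (f : ℕ → List α) (i : ℕ), i ∈ L →
    (∀ j ∈ L, ∀ x ∈ f j, key x = j) →
    ∃ c₀ : ℕ, ∀ y ∈ f i, (L.flatMap f).idxOf y = c₀ + (f i).idxOf y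
  | [], f, i, hi, _ => absurd hi (by simp)
  | a :: L, f, i, hi, hk => by
    by_cases hai : a = i
    · subst hai
      refine ⟨0, fun y hy => ?_⟩
      rw [List.flatMap_cons, pidx_append_of_mem _ hy, Nat.zero_add]
    · have hiL : i ∈ L := by
        rcases List.mem_cons.mp hi with h | h
        · exact absurd h.symm hai
        · exact h
      obtain ⟨c₀, hc⟩ := indexOf_flatMap_offset key L f i hiL
        (fun j hj => hk j (by simp [hj]))
      refine ⟨(f a).length + c₀, fun y hy => ?_⟩
      have hya : y ∉ f a := fun h => hai ((hk a (by simp) y h).symm.trans (hk i hi y hy))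
      rw [List.flatMap_cons, pidx_append_of_not_mem _ hya, hc y hy, Nat.add_assoc]

theorem indexOf_walk_false : ∀ (t : PTree) (p : List ℕ) (w : PTree), p ≠ [] →
    subtreeAt p t = some w →
    (walk t).idxOf ((p, false)) = (walk t).idxOf ((p, true)) + (2 * size w - 1)
  | node l, [], w, hp, _ => absurd rfl hp
  | node l, i :: q, w, _, hsub => by
    rw [subtreeAt_cons] at hsub
    have hi : i < l.length := by
      rcases hli : l[i]? with _ | c
      · rw [hli] at hsub; simp at hsub
      · exact (List.getElem?_eq_some_iff.mp hli).1
    have hli : l[i]? = some l[i] := List.getElem?_eq_getElem hi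
    rw [hli] at hsub
    simp only [Option.bind_some] at hsub
    have hgd : l.getD i default = l[i] := List.getD_eq_getElem _ _ hi
    have hmem : l[i] ∈ l := List.getElem_mem hi
    rw [walk_node]
    obtain ⟨c₀, hc₀⟩ := indexOf_flatMap_offset (fun x : List ℕ × Bool => x.1.headI)
      (List.range l.length).reverse (fun j => wblk j (l.getD j default)) i
      (by simp [hi]) (fun j hj x hx => headI_of_mem_wblk hx)
    rw [hgd] at hc₀
    cases q with
    | nil =>
      rw [subtreeAt_nil] at hsub
      cases hsub
      have hmt : (([i], true) : List ℕ × Bool) ∈ wblk i l[i] := mem_wblk.mpr (Or.inl rfl)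
      have hmf : (([i], false) : List ℕ × Bool) ∈ wblk i l[i] := mem_wblk.mpr (Or.inl rfl)
      rw [hc₀ _ hmf, hc₀ _ hmt, indexOf_wblk_false, indexOf_wblk_true, length_walk]
      have := size_pos l[i]
      omega
    | cons j q' =>
      have hqne : (j :: q') ≠ ([] : List ℕ) := by simp
      have hmemT : ((j :: q', true) : List ℕ × Bool) ∈ walk l[i] :=
        (mem_walk l[i] _ _).mpr ⟨hqne, by simp [hsub]⟩
      have hmemF : ((j :: q', false) : List ℕ × Bool) ∈ walk l[i] :=
        (mem_walk l[i] _ _).mpr ⟨hqne, by simp [hsub]⟩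
      have hrec := indexOf_walk_false l[i] (j :: q') w hqne hsub
      have hmT : ((i :: j :: q', true) : List ℕ × Bool) ∈ wblk i l[i] :=
        mem_wblk.mpr (Or.inr ⟨j :: q', rfl, hmemT⟩)
      have hmF : ((i :: j :: q', false) : List ℕ × Bool) ∈ wblk i l[i] :=
        mem_wblk.mpr (Or.inr ⟨j :: q', rfl, hmemF⟩)
      rw [hc₀ _ hmF, hc₀ _ hmT, indexOf_wblk_deep _ _ _ _ hmemF,
        indexOf_wblk_deep _ _ _ _ hmemT, hrec]
      omega
decreasing_by
  have := List.sizeOf_lt_of_mem hmem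
  simp only [node.sizeOf_spec]; omega

lemma prod_flatMap_real (L : List ℕ) (f : ℕ → List ℝ) :
    (L.flatMap f).prod = (L.map (fun i => (f i).prod)).prod := by
  induction L <;> simp_all

lemma filter_flatMap {α : Type*} (L : List ℕ) (f : ℕ → List α) (p : α → Bool) :
    (L.flatMap f).filter p = L.flatMap (fun a => (f a).filter p) := by
  induction L <;> simp_all [List.filter_append]

theorem prod_walk_filter (B : ℕ → ℝ) : ∀ (t : PTree),
    (((walk t).filter (fun x => x.2)).map
      (fun x => B (size ((subtreeAt x.1 t).getD default)))).prod = nodeProd B t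
  | node l => by
    have IH : ∀ c ∈ l,
        (((walk c).filter (fun x => x.2)).map
          (fun x => B (size ((subtreeAt x.1 c).getD default)))).prod = nodeProd B c :=
      fun c hc => prod_walk_filter B c
    rw [walk_node, filter_flatMap, List.map_flatMap, prod_flatMap_real,
      List.map_reverse, List.prod_reverse]
    have hmap : (List.range l.length).map
          (fun i => (((wblk i (l.getD i default)).filter (fun x => x.2)).map
            (fun x => B (size ((subtreeAt x.1 (node l)).getD default)))).prod)
        = (List.range l.length).map
          (fun i => (fun c => B (size c) * nodeProd B c) (l.getD i default)) := by
      apply List.map_congr_left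
      intro i hi
      rw [List.mem_range] at hi
      have hgd : l.getD i default = l[i] := List.getD_eq_getElem _ _ hi
      have hli : l[i]? = some l[i] := List.getElem?_eq_getElem hi
      have hmem : l.getD i default ∈ l := by rw [hgd]; exact List.getElem_mem hi
      have hsub1 : subtreeAt [i] (node l) = some (l.getD i default) := by
        rw [subtreeAt_cons, hli, hgd]; rfl
      have hsubc : ∀ q : List ℕ, subtreeAt (i :: q) (node l) = subtreeAt q (l.getD i default) := by
        intro q
        rw [subtreeAt_cons, hli, hgd]
        rfl
      have hfb : (wblk i (l.getD i default)).filter (fun x => x.2)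
          = ([i], true) :: ((walk (l.getD i default)).filter
              (fun x => x.2)).map (fun pb => (i :: pb.1, pb.2)) := by
        rw [wblk, List.filter_cons, List.filter_append, List.filter_map]
        have hcomp : ((fun x : List ℕ × Bool => x.2) ∘ fun pb : List ℕ × Bool => (i :: pb.1, pb.2))
            = fun x : List ℕ × Bool => x.2 := rfl
        rw [hcomp]
        simp
      simp only
      rw [hfb, List.map_cons, List.prod_cons, List.map_map]
      rw [hsub1]
      have hmapeq : ((fun x : List ℕ × Bool => B (size ((subtreeAt x.1 (node l)).getD default)))
            ∘ fun pb : List ℕ × Bool => (i :: pb.1, pb.2))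
          = fun x : List ℕ × Bool => B (size ((subtreeAt x.1 (l.getD i default)).getD default)) := by
        funext x
        simp only [Function.comp_apply]
        rw [hsubc]
      rw [hmapeq, IH _ hmem]
      rfl
    rw [hmap, map_range_getD l (fun c => B (size c) * nodeProd B c), nodeProd,
      attach_map_eq l (fun c => B (size c) * nodeProd B c)]

theorem bare_eq_nodeProd (B : ℕ → ℝ) : ∀ (t : PTree),
    bare B t = B (size t) * nodeProd B t
  | node l => by
    rw [bare, nodeProd]
    congr 1
    exact congrArg List.prod (List.map_congr_left fun c hc => bare_eq_nodeProd B c.1)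
decreasing_by
  have := List.sizeOf_lt_of_mem c.2
  simp only [node.sizeOf_spec]; omega

end PTree


open PTree in
/-- Let `B^r_k = β²·r(2k−1)` and let `t` be a plane tree with `|t| = k+1 ≥ 2`.
If `σ` is the involution of `{1,…,2k}` induced by the right-to-left walk on
`t` (for each edge it exchanges the steps of its two crossings), then
`∏_{i < σ(i)} β²·r(σ(i)−i) = ∏_{w ≠ root} B^r_{|t_w|}`, and this product
equals `B^r(t)/B^r_{|t|}` whenever `B^r_{|t|} ≠ 0`, where `B^r` is the bare
Green function with weights `(B^r_k)`. -/
theorem crossing_product_eq_bare (β : ℝ) (hβ : 0 < β) (r : ℕ → ℝ)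
    (Br : ℕ → ℝ) (hBr : ∀ k : ℕ, 1 ≤ k → Br k = β ^ 2 * r (2 * k - 1))
    (t : PTree) (k : ℕ) (hk : 1 ≤ k) (hsize : size t = k + 1)
    (σ : ℕ → ℕ)
    (hσ : ∀ (p : List ℕ) (w : PTree), p ≠ [] → subtreeAt p t = some w →
      σ (sDown t p) = sUp t p ∧ σ (sUp t p) = sDown t p) :
    (∏ i ∈ (Finset.Icc 1 (2 * k)).filter (fun i => i < σ i),
        (β ^ 2 * r (σ i - i))) =
      nodeProd Br t ∧
    (Br (size t) ≠ 0 →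
      (∏ i ∈ (Finset.Icc 1 (2 * k)).filter (fun i => i < σ i),
          (β ^ 2 * r (σ i - i))) = bare Br t / Br (size t)) := by

  classical
  have hlen : (walk t).length = 2 * k := by
    rw [PTree.length_walk, hsize]
    omega
  have hnd : (walk t).Nodup := PTree.nodup_walk t
  have hWnd : ((walk t).filter (fun x => x.2)).Nodup := hnd.filter _
  have hElem : ∀ x ∈ (walk t).filter (fun x : List ℕ × Bool => x.2),
      ∃ w : PTree, subtreeAt x.1 t = some w ∧
        σ ((walk t).idxOf x + 1) = (walk t).idxOf x + 1 + (2 * size w - 1) ∧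
        1 ≤ size w := by
    intro x hx
    rw [List.mem_filter] at hx
    obtain ⟨hxm, hx2⟩ := hx
    have hxe : (x.1, true) = x := by rw [← hx2]
    have hxm' : (x.1, true) ∈ walk t := hxe ▸ hxm
    obtain ⟨hnenil, hsome⟩ := (PTree.mem_walk t x.1 true).mp hxm'
    obtain ⟨w, hw⟩ := Option.isSome_iff_exists.mp hsome
    have hidxf := PTree.indexOf_walk_false t x.1 w hnenil hw
    have hσ1 := (hσ x.1 w hnenil hw).1
    simp only [PTree.sDown, PTree.sUp] at hσ1
    refine ⟨w, hw, ?_, PTree.one_le_size w⟩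
    rw [← hxe, hσ1, hidxf]
    omega
  have h1 : (∏ i ∈ (Finset.Icc 1 (2 * k)).filter (fun i => i < σ i),
      (β ^ 2 * r (σ i - i))) = nodeProd Br t := by
    rw [← PTree.prod_walk_filter Br t, ← List.prod_toFinset _ hWnd]
    refine (Finset.prod_bij
      (fun x (_ : x ∈ ((walk t).filter (fun x : List ℕ × Bool => x.2)).toFinset) =>
        (walk t).idxOf x + 1) ?_ ?_ ?_ ?_).symm
    · intro x hx
      have hxW := List.mem_toFinset.mp hx
      obtain ⟨w, hw, hσv, hs⟩ := hElem x hxW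
      have hxm : x ∈ walk t := (List.mem_filter.mp hxW).1
      have hlt : (walk t).idxOf x < (walk t).length := PTree.pidx_lt_length hxm
      rw [hlen] at hlt
      rw [Finset.mem_filter, Finset.mem_Icc]
      omega
    · intro x hx y hy he
      have hxm : x ∈ walk t := (List.mem_filter.mp (List.mem_toFinset.mp hx)).1
      have hym : y ∈ walk t := (List.mem_filter.mp (List.mem_toFinset.mp hy)).1
      exact PTree.pidx_inj hxm hym (by omega)
    · intro b hb
      rw [Finset.mem_filter, Finset.mem_Icc] at hb
      obtain ⟨⟨hb1, hb2⟩, hbσ⟩ := hb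
      have hj : b - 1 < (walk t).length := by omega
      have hxm : (walk t)[b-1] ∈ walk t := List.getElem_mem hj
      have hidx : (walk t).idxOf ((walk t)[b-1]) = b - 1 :=
        PTree.pidx_getElem_indexOf hnd _ hj
      rcases hx2 : ((walk t)[b-1]'hj).2 with _ | _
      · exfalso
        have hxf : (((walk t)[b-1]'hj).1, false) = (walk t)[b-1]'hj := by
          rw [← hx2]
        have hxmf : (((walk t)[b-1]'hj).1, false) ∈ walk t := by rw [hxf]; exact hxm
        obtain ⟨hnenil, hsome⟩ :=
          (PTree.mem_walk t ((walk t)[b-1]'hj).1 false).mp hxmf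
        obtain ⟨w, hw⟩ := Option.isSome_iff_exists.mp hsome
        have hidxf := PTree.indexOf_walk_false t _ w hnenil hw
        have hσ2 := (hσ _ w hnenil hw).2
        simp only [PTree.sDown, PTree.sUp] at hσ2
        rw [hxf, hidx] at hidxf hσ2
        have hb' : b - 1 + 1 = b := by omega
        rw [hb'] at hσ2
        have hs := PTree.one_le_size w
        omega
      · refine ⟨(walk t)[b-1]'hj, ?_, ?_⟩
        · rw [List.mem_toFinset, List.mem_filter]
          exact ⟨hxm, hx2⟩
        · rw [hidx]
          omega
    · intro x hx
      obtain ⟨w, hw, hσv, hs⟩ := hElem x (List.mem_toFinset.mp hx)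
      have harg : σ ((walk t).idxOf x + 1) - ((walk t).idxOf x + 1)
          = 2 * size w - 1 := by omega
      rw [harg, hw, Option.getD_some, hBr (size w) hs]
  refine ⟨h1, fun hne0 => ?_⟩
  rw [h1, PTree.bare_eq_nodeProd Br t]
  exact (mul_div_cancel_left₀ _ hne0).symm
end

section
/- For every integer n ≥ 0, ∑_{t∈ℱ_{n+1}} ∫₀¹ φ^x_v(t) dv = n^n/(n+1)! (with 0⁰ = 1), where the sum is over rooted plane trees with n+1 nodes and φ^x is the iterated integral functional associated with the kernels a^x(u,v) = 1_{[0,u]}(v) and a^y(u,v) = 1_{[u,1]}(v). -/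
open scoped Classical

namespace PTree

/-- The iterated integrals `φ^x` (flag `true`) and `φ^y` (flag `false`)
associated with the kernels `a^x(u,v) = 1_{[0,u]}(v)`, `a^y(u,v) = 1_{[u,1]}(v)`:
`φ^x_u(•) = φ^y_u(•) = 1` and, for `t = B₊(t₁,…,t_k)`,
`φ^x_u(t) = ∏ᵢ ∫₀ᵘ φ^y_v(tᵢ) dv` and `φ^y_u(t) = ∏ᵢ ∫ᵤ¹ φ^x_v(tᵢ) dv`. -/
noncomputable def phiT : Bool → ℝ → PTree → ℝ
  | true, u, node l =>
      (l.attach.map (fun c => ∫ v in (0:ℝ)..u, phiT false v c.1)).prod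
  | false, u, node l =>
      (l.attach.map (fun c => ∫ v in u..(1:ℝ), phiT true v c.1)).prod
decreasing_by
  all_goals
  · have := List.sizeOf_lt_of_mem c.2
    simp only [node.sizeOf_spec]; omega

end PTree


noncomputable def abP : ℕ → ℝ → ℝ
  | 0, _ => 1
  | n+1, x => x * (x + (n+1 : ℕ)) ^ n

lemma abP_zero (x : ℝ) : abP 0 x = 1 := rfl
lemma abP_succ (n : ℕ) (x : ℝ) : abP (n+1) x = x * (x + (n+1 : ℕ)) ^ n := rfl

lemma abP_cont (n : ℕ) : Continuous (abP n) := by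
  cases n with
  | zero => exact continuous_const
  | succ m =>
      have : abP (m+1) = fun x : ℝ => x * (x + ((m+1:ℕ):ℝ)) ^ m := funext fun x => abP_succ m x
      rw [this]
      exact continuous_id.mul ((continuous_id.add continuous_const).pow m)

lemma abP_at_zero (n : ℕ) (hn : 0 < n) : abP n 0 = 0 := by
  cases n with
  | zero => omega
  | succ m => simp [abP_succ]

lemma abP_hasDerivAt (n : ℕ) (x : ℝ) :
    HasDerivAt (abP (n+1)) (((n+1:ℕ):ℝ) * abP n (x+1)) x := by
  have hpow : HasDerivAt (fun y : ℝ => (y + ((n+1:ℕ):ℝ)) ^ n)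
      ((n:ℝ) * (x + ((n+1:ℕ):ℝ))^(n-1) * 1) x :=
    HasDerivAt.pow ((hasDerivAt_id x).add_const ((n+1:ℕ):ℝ)) n
  have h1 : HasDerivAt (fun y : ℝ => y * (y + ((n+1:ℕ):ℝ)) ^ n)
      (1 * (x + ((n+1:ℕ):ℝ))^n + x * ((n:ℝ) * (x + ((n+1:ℕ):ℝ))^(n-1) * 1)) x :=
    (hasDerivAt_id x).mul hpow
  have heq : abP (n+1) = fun y : ℝ => y * (y + ((n+1:ℕ):ℝ)) ^ n := funext fun y => abP_succ n y
  rw [heq]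
  convert h1 using 1
  cases n with
  | zero => simp [abP_zero]
  | succ m =>
      rw [abP_succ]
      have hA : x + 1 + ((m+1:ℕ):ℝ) = x + ((m+1+1:ℕ):ℝ) := by push_cast; ring
      rw [hA, show m + 1 - 1 = m from rfl]
      push_cast
      ring

lemma abP_binomial (n : ℕ) (x y : ℝ) :
    ∑ k ∈ Finset.range (n+1), ((n.choose k : ℕ) : ℝ) * abP k x * abP (n-k) y
      = abP n (x+y) := by
  induction n generalizing x y with
  | zero => simp [abP_zero]
  | succ n ih =>
      have main : ∀ z : ℝ,
          (∑ k ∈ Finset.range (n+2), (((n+1).choose k : ℕ) : ℝ) * abP k z * abP (n+1-k) y)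
            - abP (n+1) (z+y)
          = (∑ k ∈ Finset.range (n+2), (((n+1).choose k : ℕ) : ℝ) * abP k 0 * abP (n+1-k) y)
            - abP (n+1) (0+y) := by
        intro z
        have hderiv : ∀ x : ℝ, HasDerivAt
            (fun z => (∑ k ∈ Finset.range (n+2), (((n+1).choose k : ℕ) : ℝ) * abP k z * abP (n+1-k) y)
              - abP (n+1) (z+y)) 0 x := by
          intro x
          have term : ∀ k ∈ Finset.range (n+2), HasDerivAt
              (fun z => (((n+1).choose k : ℕ) : ℝ) * abP k z * abP (n+1-k) y)
              (if k = 0 then 0 else (((n+1).choose k : ℕ) : ℝ) * (((k:ℕ):ℝ) * abP (k-1) (x+1)) * abP (n+1-k) y) x := by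
            intro k _
            rcases k with _ | k
            · simpa [abP_zero] using hasDerivAt_const x ((((n+1).choose 0 : ℕ):ℝ) * 1 * abP (n+1) y)
            · have h := ((abP_hasDerivAt k x).const_mul ((((n+1).choose (k+1) : ℕ)):ℝ)).mul_const (abP (n+1-(k+1)) y)
              simp only [if_neg (Nat.succ_ne_zero k)]
              exact h
          have hfd := HasDerivAt.fun_sum term
          have hsum : (∑ i ∈ Finset.range (n+2), if i = 0 then (0:ℝ)
              else (((n+1).choose i : ℕ):ℝ) * (((i:ℕ):ℝ) * abP (i-1) (x+1)) * abP (n+1-i) y)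
              = ((n+1:ℕ):ℝ) * abP n (x+1+y) := by
            rw [Finset.sum_range_succ']
            simp only [Nat.add_sub_cancel]
            have hk : ∀ k ∈ Finset.range (n+1),
                (if k + 1 = 0 then (0:ℝ)
                  else (((n+1).choose (k+1) : ℕ):ℝ) * (((k+1:ℕ):ℝ) * abP k (x+1)) * abP (n+1-(k+1)) y)
                = ((n+1:ℕ):ℝ) * ((((n.choose k : ℕ)):ℝ) * abP k (x+1) * abP (n-k) y) := by
              intro k _
              rw [if_neg (Nat.succ_ne_zero k)]
              have hc : (n+1) * n.choose k = (n+1).choose (k+1) * (k+1) := Nat.add_one_mul_choose_eq n k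
              have hcr : ((n+1:ℕ):ℝ) * ((n.choose k : ℕ):ℝ) = (((n+1).choose (k+1) : ℕ):ℝ) * ((k+1:ℕ):ℝ) := by
                exact_mod_cast congrArg (fun m : ℕ => (m:ℝ)) hc
              have hsub : n + 1 - (k+1) = n - k := by omega
              rw [hsub]
              calc (((n+1).choose (k+1) : ℕ):ℝ) * (((k+1:ℕ):ℝ) * abP k (x+1)) * abP (n-k) y
                  = ((((n+1).choose (k+1) : ℕ):ℝ) * ((k+1:ℕ):ℝ)) * abP k (x+1) * abP (n-k) y := by ring
                _ = (((n+1:ℕ):ℝ) * ((n.choose k : ℕ):ℝ)) * abP k (x+1) * abP (n-k) y := by rw [hcr]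
                _ = ((n+1:ℕ):ℝ) * ((((n.choose k : ℕ)):ℝ) * abP k (x+1) * abP (n-k) y) := by ring
            rw [Finset.sum_congr rfl hk]
            simp only [if_true, ite_true]
            rw [add_zero, ← Finset.mul_sum, ih (x+1) y]
          rw [hsum] at hfd
          have hgd : HasDerivAt (fun z : ℝ => abP (n+1) (z+y)) (((n+1:ℕ):ℝ) * abP n (x+1+y)) x := by
            have hf : HasDerivAt (fun z : ℝ => z + y) 1 x := (hasDerivAt_id x).add_const y
            have hg : HasDerivAt (abP (n+1)) (((n+1:ℕ):ℝ) * abP n (x+y+1)) ((fun z : ℝ => z + y) x) :=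
              abP_hasDerivAt n (x+y)
            have h := hg.comp x hf
            have hxy : x + y + 1 = x + 1 + y := by ring
            simpa [Function.comp_def, hxy, mul_one] using h
          have := hfd.sub hgd; rw [sub_self] at this; exact this
        exact is_const_of_deriv_eq_zero (fun z => (hderiv z).differentiableAt)
          (fun z => (hderiv z).deriv) z 0
      have h0 : (∑ k ∈ Finset.range (n+2), (((n+1).choose k : ℕ) : ℝ) * abP k 0 * abP (n+1-k) y)
          = abP (n+1) (0+y) := by
        rw [Finset.sum_range_succ']
        have : ∀ k ∈ Finset.range (n+1),
            (((n+1).choose (k+1) : ℕ) : ℝ) * abP (k+1) 0 * abP (n+1-(k+1)) y = 0 := by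
          intro k _; rw [abP_at_zero (k+1) (Nat.succ_pos k)]; ring
        rw [Finset.sum_congr rfl this]
        simp [abP_zero]
      have hm := main x
      rw [h0, sub_self] at hm
      linarith [hm]

lemma abP_conv (n : ℕ) (w : ℝ) :
    ∑ k ∈ Finset.range (n+1),
        (-abP (k+1) (-w) / (((k+1).factorial : ℕ) : ℝ)) * (abP (n-k) w / (((n-k).factorial : ℕ) : ℝ))
      = abP (n+1) w / (((n+1).factorial : ℕ) : ℝ) := by
  have key : ∑ k ∈ Finset.range (n+1),
      (((n+1).choose (k+1) : ℕ) : ℝ) * abP (k+1) (-w) * abP (n-k) w = -abP (n+1) w := by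
    have hb := abP_binomial (n+1) (-w) w
    rw [Finset.sum_range_succ'] at hb
    have hz : abP (n+1) (-w + w) = 0 := by
      rw [show -w + w = 0 by ring]; exact abP_at_zero (n+1) (Nat.succ_pos n)
    have h0 : (((n+1).choose 0 : ℕ) : ℝ) * abP 0 (-w) * abP (n+1-0) w = abP (n+1) w := by
      simp [abP_zero]
    rw [hz, h0] at hb
    have hsub : ∀ k ∈ Finset.range (n+1), n + 1 - (k+1) = n - k := fun k _ => by omega
    rw [Finset.sum_congr rfl (fun k hk => by rw [hsub k hk])] at hb
    linarith [hb]
  have step : ∀ k ∈ Finset.range (n+1),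
      (-abP (k+1) (-w) / (((k+1).factorial : ℕ) : ℝ)) * (abP (n-k) w / (((n-k).factorial : ℕ) : ℝ))
      = (((n+1).choose (k+1) : ℕ) : ℝ) * abP (k+1) (-w) * abP (n-k) w * (-1 / (((n+1).factorial : ℕ) : ℝ)) := by
    intro k hk
    have hkn : k + 1 ≤ n + 1 := by
      have := Finset.mem_range.mp hk; omega
    have hC : (n+1).choose (k+1) * (k+1).factorial * (n+1-(k+1)).factorial = (n+1).factorial :=
      Nat.choose_mul_factorial_mul_factorial hkn
    have hsub : n + 1 - (k+1) = n - k := by omega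
    rw [hsub] at hC
    have hCr : (((n+1).choose (k+1) : ℕ) : ℝ) * (((k+1).factorial : ℕ) : ℝ) * (((n-k).factorial : ℕ) : ℝ)
        = (((n+1).factorial : ℕ) : ℝ) := by exact_mod_cast congrArg (fun m : ℕ => (m:ℝ)) hC
    have h1 : (((k+1).factorial : ℕ) : ℝ) ≠ 0 := Nat.cast_ne_zero.mpr (Nat.factorial_ne_zero _)
    have h2 : (((n-k).factorial : ℕ) : ℝ) ≠ 0 := Nat.cast_ne_zero.mpr (Nat.factorial_ne_zero _)
    have h3 : (((n+1).factorial : ℕ) : ℝ) ≠ 0 := Nat.cast_ne_zero.mpr (Nat.factorial_ne_zero _)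
    field_simp
    linear_combination (abP (k+1) (-w) * abP (n-k) w) * hCr
  rw [Finset.sum_congr rfl step, ← Finset.sum_mul, key]
  have h3 : (((n+1).factorial : ℕ) : ℝ) ≠ 0 := Nat.cast_ne_zero.mpr (Nat.factorial_ne_zero _)
  field_simp

lemma integral_abP_flip (n : ℕ) (u : ℝ) :
    ∫ v in (0:ℝ)..u, abP n (1-v) = -abP (n+1) (-u) / ((n+1:ℕ) : ℝ) := by
  have hderiv : ∀ v : ℝ, HasDerivAt (fun v : ℝ => -abP (n+1) (-v) / ((n+1:ℕ):ℝ)) (abP n (1-v)) v := by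
    intro v
    have hf : HasDerivAt (fun z : ℝ => -z) (-1) v := (hasDerivAt_id v).neg
    have hg : HasDerivAt (abP (n+1)) (((n+1:ℕ):ℝ) * abP n (-v+1)) ((fun z : ℝ => -z) v) :=
      abP_hasDerivAt n (-v)
    have h := (hg.comp v hf).neg.div_const ((n+1:ℕ):ℝ)
    have hne : ((n+1:ℕ):ℝ) ≠ 0 := by positivity
    have : -(((n+1:ℕ):ℝ) * abP n (-v+1) * -1) / ((n+1:ℕ):ℝ) = abP n (1-v) := by
      rw [show -v + 1 = 1 - v by ring]; field_simp
    rw [this] at h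
    exact h
  have hint : IntervalIntegrable (fun v => abP n (1-v)) MeasureTheory.volume 0 u :=
    ((abP_cont n).comp (continuous_const.sub continuous_id)).intervalIntegrable 0 u
  rw [intervalIntegral.integral_eq_sub_of_hasDerivAt (fun v _ => hderiv v) hint]
  rw [show -(0:ℝ) = 0 by ring, abP_at_zero (n+1) (Nat.succ_pos n)]
  ring

lemma integral_abP_right (n : ℕ) (u : ℝ) :
    ∫ v in u..(1:ℝ), abP n v = -abP (n+1) (u-1) / ((n+1:ℕ) : ℝ) := by
  have hderiv : ∀ v : ℝ, HasDerivAt (fun v : ℝ => abP (n+1) (v-1) / ((n+1:ℕ):ℝ)) (abP n v) v := by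
    intro v
    have hf : HasDerivAt (fun z : ℝ => z - 1) 1 v := (hasDerivAt_id v).sub_const 1
    have hg : HasDerivAt (abP (n+1)) (((n+1:ℕ):ℝ) * abP n (v-1+1)) ((fun z : ℝ => z - 1) v) :=
      abP_hasDerivAt n (v-1)
    have h := (hg.comp v hf).div_const ((n+1:ℕ):ℝ)
    have hne : ((n+1:ℕ):ℝ) ≠ 0 := by positivity
    have : (((n+1:ℕ):ℝ) * abP n (v-1+1) * 1) / ((n+1:ℕ):ℝ) = abP n v := by
      rw [show v - 1 + 1 = v by ring]; field_simp
    rw [this] at h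
    exact h
  have hint : IntervalIntegrable (abP n) MeasureTheory.volume u 1 :=
    (abP_cont n).intervalIntegrable u 1
  rw [intervalIntegral.integral_eq_sub_of_hasDerivAt (fun v _ => hderiv v) hint]
  rw [show (1:ℝ) - 1 = 0 by ring, abP_at_zero (n+1) (Nat.succ_pos n)]
  ring

namespace PTree

lemma node_inj : Function.Injective node := fun a b h => by injection h

lemma phiT_true_node (u : ℝ) (l : List PTree) :
    phiT true u (node l) = (l.map (fun c => ∫ v in (0:ℝ)..u, phiT false v c)).prod := by
  rw [phiT]
  exact congrArg List.prod (List.attach_map_val (l := l) (f := fun c => ∫ v in (0:ℝ)..u, phiT false v c))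

lemma phiT_false_node (u : ℝ) (l : List PTree) :
    phiT false u (node l) = (l.map (fun c => ∫ v in u..(1:ℝ), phiT true v c)).prod := by
  rw [phiT]
  exact congrArg List.prod (List.attach_map_val (l := l) (f := fun c => ∫ v in u..(1:ℝ), phiT true v c))

lemma cont_list_prod (l : List PTree) (F : PTree → ℝ → ℝ)
    (h : ∀ c ∈ l, Continuous (F c)) :
    Continuous (fun u => (l.map (fun c => F c u)).prod) := by
  induction l with
  | nil => simpa using continuous_const
  | cons t l ih =>
      simp only [List.map_cons, List.prod_cons]
      exact (h t List.mem_cons_self).mul (ih (fun c hc => h c (List.mem_cons_of_mem t hc)))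

lemma phiT_cont_aux : ∀ (N : ℕ) (t : PTree), sizeOf t ≤ N → ∀ b, Continuous (fun u => phiT b u t) := by
  intro N
  induction N with
  | zero =>
      intro t h
      cases t with
      | node l => simp only [node.sizeOf_spec] at h; omega
  | succ N ih =>
      intro t h b
      cases t with
      | node l =>
          have hc : ∀ c ∈ l, ∀ b', Continuous (fun u => phiT b' u c) := by
            intro c hcmem b'
            apply ih
            have h1 := List.sizeOf_lt_of_mem hcmem
            simp only [node.sizeOf_spec] at h
            omega
          cases b
          · simp only [phiT_false_node]
            apply cont_list_prod
            intro c hcmem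
            have hint : ∀ a b' : ℝ, IntervalIntegrable (fun v => phiT true v c)
                MeasureTheory.volume a b' := fun a b' => (hc c hcmem true).intervalIntegrable a b'
            have h1 : Continuous (fun u : ℝ => ∫ v in (1:ℝ)..u, phiT true v c) :=
              intervalIntegral.continuous_primitive hint 1
            have h2 : (fun u : ℝ => ∫ v in u..(1:ℝ), phiT true v c)
                = fun u : ℝ => -∫ v in (1:ℝ)..u, phiT true v c := by
              funext u; rw [intervalIntegral.integral_symm]
            rw [h2]
            exact h1.neg
          · simp only [phiT_true_node]
            apply cont_list_prod
            intro c hcmem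
            exact intervalIntegral.continuous_primitive
              (fun a b' => (hc c hcmem false).intervalIntegrable a b') 0

lemma phiT_cont (b : Bool) (t : PTree) : Continuous (fun u => phiT b u t) :=
  phiT_cont_aux (sizeOf t) t le_rfl b

/-- Finset of forests (lists of plane trees) of total size `n`. -/
noncomputable def Fo : ℕ → Finset (List PTree)
  | 0 => {[]}
  | n+1 => (Finset.range (n+1)).attach.biUnion fun j =>
      (((Fo j.1).image node) ×ˢ Fo (n - j.1)).image fun p => p.1 :: p.2
decreasing_by
  · have := Finset.mem_range.mp j.2; omega
  · have := Finset.mem_range.mp j.2; omega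

lemma mem_Fo : ∀ (n : ℕ) (l : List PTree), l ∈ Fo n ↔ (l.map size).sum = n := by
  intro n
  induction n using Nat.strong_induction_on with
  | _ n ih =>
      intro l
      cases n with
      | zero =>
          rw [Fo]
          simp only [Finset.mem_singleton]
          constructor
          · rintro rfl; simp
          · intro hs
            cases l with
            | nil => rfl
            | cons t l2 =>
                exfalso
                simp only [List.map_cons, List.sum_cons] at hs
                have := size_pos t
                omega
      | succ n =>
          rw [Fo]
          simp only [Finset.mem_biUnion, Finset.mem_attach, true_and, Finset.mem_image,
            Finset.mem_product, Prod.exists]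
          constructor
          · rintro ⟨j, a, b, ⟨ha, hb⟩, rfl⟩
            obtain ⟨f, hf, rfl⟩ := ha
            have hj := Finset.mem_range.mp j.2
            have h1 : (f.map size).sum = j.1 := (ih j.1 hj f).mp hf
            have h2 : (b.map size).sum = n - j.1 := (ih (n - j.1) (by omega) b).mp hb
            simp only [List.map_cons, List.sum_cons, size_node, h1, h2]
            omega
          · intro hs
            cases l with
            | nil => simp at hs
            | cons t l2 =>
                cases t with
                | node f =>
                    simp only [List.map_cons, List.sum_cons, size_node] at hs
                    set j := (f.map size).sum with hjdef
                    have hjn : j ≤ n := by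
                      have := (l2.map size).sum
                      omega
                    refine ⟨⟨j, Finset.mem_range.mpr (by omega)⟩, node f, l2,
                      ⟨⟨f, ?_, rfl⟩, ?_⟩, rfl⟩
                    · exact (ih j (by omega) f).mpr rfl
                    · exact (ih (n - j) (by omega) l2).mpr (by omega)

/-- Convolution structure of forest sums. -/
lemma sum_Fo_succ (w : PTree → ℝ) (n : ℕ) :
    ∑ l ∈ Fo (n+1), (l.map w).prod
      = ∑ j ∈ Finset.range (n+1),
          (∑ f ∈ Fo j, w (node f)) * (∑ l ∈ Fo (n-j), (l.map w).prod) := by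
  rw [Fo]
  rw [Finset.sum_biUnion]
  · rw [← Finset.sum_attach (Finset.range (n+1))
      (fun j => (∑ f ∈ Fo j, w (node f)) * (∑ l ∈ Fo (n-j), (l.map w).prod))]
    refine Finset.sum_congr rfl fun j _ => ?_
    have hinj : ∀ p ∈ ((Fo j.1).image node) ×ˢ Fo (n - j.1),
        ∀ q ∈ ((Fo j.1).image node) ×ˢ Fo (n - j.1),
        (fun p : PTree × List PTree => p.1 :: p.2) p
          = (fun p : PTree × List PTree => p.1 :: p.2) q → p = q := by
      rintro ⟨a1, a2⟩ _ ⟨b1, b2⟩ _ h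
      injection h with h1 h2
      simp_all
    rw [Finset.sum_image hinj, Finset.sum_product,
      Finset.sum_image (fun a _ b _ h => node_inj h), Finset.sum_mul_sum]
    refine Finset.sum_congr rfl fun f _ => Finset.sum_congr rfl fun l _ => ?_
    simp [List.map_cons]
  · intro a _ b _ hab
    rw [Function.onFun, Finset.disjoint_left]
    intro l hla hlb
    simp only [Finset.mem_image, Finset.mem_product, Prod.exists] at hla hlb
    obtain ⟨ta, la, ⟨hta, hla2⟩, rfl⟩ := hla
    obtain ⟨tb, lb, ⟨htb, hlb2⟩, heq⟩ := hlb
    obtain ⟨fa, hfa, rfl⟩ := hta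
    obtain ⟨fb, hfb, rfl⟩ := htb

    have hfab : fb = fa := by
      injection heq with h1 h2
      exact node_inj h1
    have ha1 : (fa.map size).sum = a.1 := (mem_Fo a.1 fa).mp hfa
    have hb1 : (fb.map size).sum = b.1 := (mem_Fo b.1 fb).mp hfb
    rw [hfab] at hb1
    exact hab (Subtype.ext (by omega))

end PTree

namespace PTree

lemma tree_sum_x (n : ℕ)
    (ih : ∀ m, m < n → ∀ u : ℝ,
      ∑ l ∈ Fo m, (l.map (fun c => ∫ v in u..(1:ℝ), phiT true v c)).prod
        = abP m (1-u) / ((m.factorial : ℕ) : ℝ))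
    (j : ℕ) (hj : j < n) (u : ℝ) :
    ∑ f ∈ Fo j, ∫ v in (0:ℝ)..u, phiT false v (node f)
      = -abP (j+1) (-u) / (((j+1).factorial : ℕ) : ℝ) := by
  rw [← intervalIntegral.integral_finset_sum
    (fun f _ => (phiT_cont false (node f)).intervalIntegrable 0 u)]
  have h1 : ∀ v : ℝ, (∑ f ∈ Fo j, phiT false v (node f)) = abP j (1-v) / ((j.factorial : ℕ) : ℝ) := by
    intro v
    rw [Finset.sum_congr rfl (fun f _ => phiT_false_node v f)]
    exact ih j hj v
  rw [intervalIntegral.integral_congr (fun v _ => h1 v), intervalIntegral.integral_div,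
    integral_abP_flip]
  have hf1 : ((j.factorial : ℕ) : ℝ) ≠ 0 := Nat.cast_ne_zero.mpr (Nat.factorial_ne_zero _)
  have hf2 : ((j+1:ℕ) : ℝ) ≠ 0 := by positivity
  rw [Nat.factorial_succ]
  push_cast
  field_simp

lemma tree_sum_y (n : ℕ)
    (ih : ∀ m, m < n → ∀ u : ℝ,
      ∑ l ∈ Fo m, (l.map (fun c => ∫ v in (0:ℝ)..u, phiT false v c)).prod
        = abP m u / ((m.factorial : ℕ) : ℝ))
    (j : ℕ) (hj : j < n) (u : ℝ) :
    ∑ f ∈ Fo j, ∫ v in u..(1:ℝ), phiT true v (node f)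
      = -abP (j+1) (-(1-u)) / (((j+1).factorial : ℕ) : ℝ) := by
  rw [← intervalIntegral.integral_finset_sum
    (fun f _ => (phiT_cont true (node f)).intervalIntegrable u 1)]
  have h1 : ∀ v : ℝ, (∑ f ∈ Fo j, phiT true v (node f)) = abP j v / ((j.factorial : ℕ) : ℝ) := by
    intro v
    rw [Finset.sum_congr rfl (fun f _ => phiT_true_node v f)]
    exact ih j hj v
  rw [intervalIntegral.integral_congr (fun v _ => h1 v), intervalIntegral.integral_div,
    integral_abP_right]
  have hf1 : ((j.factorial : ℕ) : ℝ) ≠ 0 := Nat.cast_ne_zero.mpr (Nat.factorial_ne_zero _)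
  have hf2 : ((j+1:ℕ) : ℝ) ≠ 0 := by positivity
  have hm : abP (j+1) (u-1) = abP (j+1) (-(1-u)) := by rw [show u-1 = -(1-u) by ring]
  rw [hm, Nat.factorial_succ]
  push_cast
  field_simp

lemma main_sums : ∀ n : ℕ,
    (∀ u : ℝ, ∑ l ∈ Fo n, (l.map (fun c => ∫ v in (0:ℝ)..u, phiT false v c)).prod
        = abP n u / ((n.factorial : ℕ) : ℝ))
  ∧ (∀ u : ℝ, ∑ l ∈ Fo n, (l.map (fun c => ∫ v in u..(1:ℝ), phiT true v c)).prod
        = abP n (1-u) / ((n.factorial : ℕ) : ℝ)) := by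
  intro n
  induction n using Nat.strong_induction_on with
  | _ n ih =>
      cases n with
      | zero =>
          constructor <;> intro u <;> (rw [Fo]; simp [abP_zero])
      | succ n =>
          constructor
          · intro u
            rw [sum_Fo_succ (fun c => ∫ v in (0:ℝ)..u, phiT false v c) n]
            refine Eq.trans (Finset.sum_congr rfl ?_) (abP_conv n u)
            intro j hj
            have hjlt := Finset.mem_range.mp hj
            rw [tree_sum_x (n+1) (fun m hm => (ih m hm).2) j (by omega) u,
              (ih (n-j) (by omega)).1 u]
          · intro u
            rw [sum_Fo_succ (fun c => ∫ v in u..(1:ℝ), phiT true v c) n]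
            refine Eq.trans (Finset.sum_congr rfl ?_) (abP_conv n (1-u))
            intro j hj
            have hjlt := Finset.mem_range.mp hj
            rw [tree_sum_y (n+1) (fun m hm => (ih m hm).1) j (by omega) u,
              (ih (n-j) (by omega)).2 u]

end PTree


open PTree in
/-- For every `n ≥ 0`, `∑_{t∈ℱ_{n+1}} ∫₀¹ φ^x_v(t) dv = nⁿ/(n+1)!`
(with `0⁰ = 1`): these are the moments `τ((TT*)ⁿ)` of the Dykema–Haagerup
triangular operator. -/
theorem sum_phi_eq_moment (n : ℕ)
    (F : Finset PTree) (hF : ∀ t : PTree, t ∈ F ↔ size t = n + 1) :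
    ∑ t ∈ F, (∫ v in (0:ℝ)..1, phiT true v t) =
      (n : ℝ) ^ n / (Nat.factorial (n + 1) : ℝ) := by
  have hFeq : F = (Fo n).image node := by
    apply Finset.ext
    intro t
    rw [hF]
    cases t with
    | node l =>
        rw [size_node]
        simp only [Finset.mem_image]
        constructor
        · intro h
          exact ⟨l, (mem_Fo n l).mpr (by omega), rfl⟩
        · rintro ⟨f, hf, heq⟩
          have hfl : f = l := node_inj heq
          subst hfl
          have := (mem_Fo n f).mp hf
          omega
  rw [hFeq, Finset.sum_image (fun a _ b _ h => node_inj h)]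
  rw [← intervalIntegral.integral_finset_sum
    (fun l _ => (phiT_cont true (node l)).intervalIntegrable 0 1)]
  have h1 : ∀ v : ℝ, (∑ l ∈ Fo n, phiT true v (node l)) = abP n v / ((n.factorial : ℕ) : ℝ) := by
    intro v
    rw [Finset.sum_congr rfl (fun l _ => phiT_true_node v l)]
    exact (main_sums n).1 v
  rw [intervalIntegral.integral_congr (fun v _ => h1 v), intervalIntegral.integral_div,
    integral_abP_right]
  have h01 : (0:ℝ) - 1 = -1 := by norm_num
  rw [h01, abP_succ n (-1), Nat.factorial_succ]
  have hc : (-1 + ((n+1:ℕ):ℝ)) = (n:ℝ) := by push_cast; ring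
  rw [hc]
  have hf1 : ((n.factorial : ℕ) : ℝ) ≠ 0 := Nat.cast_ne_zero.mpr (Nat.factorial_ne_zero _)
  have hf2 : ((n+1:ℕ) : ℝ) ≠ 0 := by positivity
  push_cast
  field_simp
end

section
/- Let Y₀(s) := ∑_{n≥0} (n^n/(n+1)!)·s^{n+1} (with 0⁰ = 1) as a formal power series. Then W(s) := s/(1 − Y₀(s)) is a well-defined formal power series with zero constant term, and it satisfies W(s)·exp(−W(s)) = s; i.e., W is the compositional inverse of G(z) = z·e^{−z}. -/
open Finset PowerSeries

lemma alt_sum_pascal (f : ℕ → ℝ) (n : ℕ) :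
    ∑ k ∈ range (n+2), (-1:ℝ)^k * ((n+1).choose k : ℝ) * f k
      = ∑ k ∈ range (n+1), (-1:ℝ)^k * (n.choose k : ℝ) * (f k - f (k+1)) := by
  rw [Finset.sum_range_succ' (fun k => (-1:ℝ)^k * ((n+1).choose k : ℝ) * f k) (n+1)]
  have h1 : ∀ k, ((n+1).choose (k+1) : ℝ) = (n.choose k : ℝ) + (n.choose (k+1) : ℝ) := by
    intro k; rw [Nat.choose_succ_succ]; push_cast; ring
  have : ∑ k ∈ range (n+1), (-1:ℝ)^(k+1) * ((n+1).choose (k+1) : ℝ) * f (k+1)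
      = ∑ k ∈ range (n+1), (-((-1:ℝ)^k * (n.choose k : ℝ) * f (k+1))
          + (-1:ℝ)^(k+1) * (n.choose (k+1) : ℝ) * f (k+1)) := by
    refine Finset.sum_congr rfl fun k _ => ?_
    rw [h1]; ring
  rw [this, Finset.sum_add_distrib]
  have h2 : ∑ k ∈ range (n+1), (-1:ℝ)^(k+1) * (n.choose (k+1) : ℝ) * f (k+1)
      = ∑ k ∈ range (n+2), (-1:ℝ)^k * (n.choose k : ℝ) * f k
        - (-1:ℝ)^0 * (n.choose 0 : ℝ) * f 0 := by
    rw [Finset.sum_range_succ' (fun k => (-1:ℝ)^k * (n.choose k : ℝ) * f k) (n+1)]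
    ring
  have h3 : ∑ k ∈ range (n+2), (-1:ℝ)^k * (n.choose k : ℝ) * f k
      = ∑ k ∈ range (n+1), (-1:ℝ)^k * (n.choose k : ℝ) * f k := by
    rw [Finset.sum_range_succ]
    simp [Nat.choose_eq_zero_of_lt (Nat.lt_succ_self n)]
  rw [h2, h3, Finset.sum_neg_distrib]
  simp only [mul_sub, Finset.sum_sub_distrib, Nat.choose_zero_right]
  simp
  ring

lemma fin_diff : ∀ j : ℕ, ∀ n : ℕ, j < n → ∀ x : ℝ,
    ∑ k ∈ range (n+1), (-1:ℝ)^k * (n.choose k : ℝ) * (x + k)^j = 0 := by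
  intro j
  induction j using Nat.strong_induction_on with
  | _ j ih =>
    intro n hn x
    obtain ⟨m, rfl⟩ : ∃ m, n = m + 1 := ⟨n - 1, by omega⟩
    have key : ∀ k : ℕ, ((x + k)^j - (x + ((k:ℕ)+1 : ℕ))^j : ℝ)
        = ∑ i ∈ range j, -((j.choose i : ℝ) * (x + k)^i) := by
      intro k
      have hb : ((x + ((k:ℕ)+1 : ℕ)) : ℝ) = (x + k) + 1 := by push_cast; ring
      have hexp := add_pow (x + (k:ℝ)) 1 j
      rw [hb, hexp, Finset.sum_range_succ]
      have : ∀ i ∈ range j, ((x+k)^i * 1^(j-i) * (j.choose i : ℝ))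
          = (j.choose i : ℝ) * (x + k)^i := fun i _ => by ring
      rw [Finset.sum_congr rfl this]
      simp only [Nat.choose_self, Nat.cast_one, Nat.sub_self, pow_zero, mul_one, one_mul]
      rw [Finset.sum_neg_distrib]
      ring
    rw [show m + 1 + 1 = m + 2 from rfl, alt_sum_pascal (fun k => (x + k)^j) m]
    have step : ∀ k ∈ range (m+1), (-1:ℝ)^k * (m.choose k : ℝ) * (((x:ℝ) + k)^j - (x + ((k:ℕ)+1:ℕ))^j)
        = ∑ i ∈ range j, -((j.choose i : ℝ) * ((-1:ℝ)^k * (m.choose k : ℝ) * (x + k)^i)) := by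
      intro k _
      rw [key k, Finset.mul_sum]
      exact Finset.sum_congr rfl fun i _ => by ring
    rw [Finset.sum_congr rfl step, Finset.sum_comm]
    apply Finset.sum_eq_zero
    intro i hi
    simp only [mem_range] at hi
    have h2 : ∑ k ∈ range (m+1), -((j.choose i : ℝ) * ((-1:ℝ)^k * (m.choose k : ℝ) * (x + k)^i))
        = -((j.choose i : ℝ) * ∑ k ∈ range (m+1), (-1:ℝ)^k * (m.choose k : ℝ) * (x + k)^i) := by
      rw [Finset.mul_sum, Finset.sum_neg_distrib]
    rw [h2, ih i hi m (by omega) x, mul_zero, neg_zero]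

lemma abel : ∀ (n : ℕ) (x y : ℝ),
    ∑ i ∈ range n, (n.choose (i+1) : ℝ) * x * (x+i+1)^i * (y + ((n-1-i : ℕ):ℝ))^(n-1-i)
      = (x + y + n)^n - (y + n)^n := by
  intro n
  induction n with
  | zero => intro x y; simp
  | succ n IH =>
    intro x y₀
    set a : ℕ → ℝ := fun i => ((n+1).choose (i+1) : ℝ) * x * (x+i+1)^i with ha
    set f : ℝ → ℝ := fun y => ∑ i ∈ range (n+1), a i * (y + ((n-i : ℕ):ℝ))^(n-i) with hf
    set g : ℝ → ℝ := fun y => (x + y + ((n:ℝ)+1))^(n+1) - (y + ((n:ℝ)+1))^(n+1) with hg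
    have hL : ∀ y : ℝ, HasDerivAt (fun y => f y - g y) 0 y := by
      intro y
      have hfd : HasDerivAt f
          (∑ i ∈ range (n+1), a i * (((n-i : ℕ):ℝ) * (y + ((n-i : ℕ):ℝ))^(n-i-1) * 1)) y := by
        apply HasDerivAt.fun_sum
        intro i _
        exact (((hasDerivAt_id y).add_const ((n-i : ℕ):ℝ)).pow (n-i)).const_mul (a i)
      have hgd : HasDerivAt g
          ((((n:ℕ)+1 : ℕ):ℝ) * (x + y + ((n:ℝ)+1))^((n+1)-1) * 1
            - (((n:ℕ)+1 : ℕ):ℝ) * (y + ((n:ℝ)+1))^((n+1)-1) * 1) y := by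
        have h1 : HasDerivAt (fun y : ℝ => (x + y + ((n:ℝ)+1))^(n+1))
            ((((n:ℕ)+1 : ℕ):ℝ) * (x + y + ((n:ℝ)+1))^((n+1)-1) * 1) y :=
          (((hasDerivAt_id y).const_add x).add_const ((n:ℝ)+1)).pow (n+1)
        have h2 : HasDerivAt (fun y : ℝ => (y + ((n:ℝ)+1))^(n+1))
            ((((n:ℕ)+1 : ℕ):ℝ) * (y + ((n:ℝ)+1))^((n+1)-1) * 1) y :=
          ((hasDerivAt_id y).add_const ((n:ℝ)+1)).pow (n+1)
        exact h1.sub h2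
      have hkey : (∑ i ∈ range (n+1), a i * (((n-i : ℕ):ℝ) * (y + ((n-i : ℕ):ℝ))^(n-i-1) * 1))
          = (((n:ℕ)+1 : ℕ):ℝ) * (x + y + ((n:ℝ)+1))^((n+1)-1) * 1
            - (((n:ℕ)+1 : ℕ):ℝ) * (y + ((n:ℝ)+1))^((n+1)-1) * 1 := by
        rw [Finset.sum_range_succ]
        have hz : a n * (((n-n : ℕ):ℝ) * (y + ((n-n : ℕ):ℝ))^(n-n-1) * 1) = 0 := by simp
        rw [hz, add_zero]
        have hterm : ∀ i ∈ range n,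
            a i * (((n-i : ℕ):ℝ) * (y + ((n-i : ℕ):ℝ))^(n-i-1) * 1)
            = ((n:ℝ)+1) * ((n.choose (i+1) : ℝ) * x * (x+i+1)^i *
                ((y+1) + ((n-1-i : ℕ):ℝ))^(n-1-i)) := by
          intro i hi
          simp only [mem_range] at hi
          have e1 : (n - i : ℕ) = (n-1-i) + 1 := by omega
          have e2 : (n - i - 1 : ℕ) = n-1-i := by omega
          have e3 : ((n-i : ℕ):ℝ) = ((n-1-i : ℕ):ℝ) + 1 := by rw [e1]; push_cast; ring
          have e4 : ((n-i:ℕ):ℝ) * ((n+1).choose (i+1) : ℝ)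
              = ((n:ℝ)+1) * (n.choose (i+1) : ℝ) := by
            have c1 : (n+1).choose (i+2) * (i+2) = (n+1).choose (i+1) * (n+1 - (i+1)) :=
              Nat.choose_succ_right_eq (n+1) (i+1)
            have c2 : (n+1) * n.choose (i+1) = (n+1).choose (i+2) * (i+2) :=
              Nat.add_one_mul_choose_eq n (i+1)
            have h0 : n+1-(i+1) = n - i := by omega
            rw [h0] at c1
            have c3 : (n+1).choose (i+1) * (n - i) = (n+1) * n.choose (i+1) :=
              c1.symm.trans c2.symm
            calc ((n-i:ℕ):ℝ) * ((n+1).choose (i+1) : ℝ)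
                = (((n+1).choose (i+1) * (n - i) : ℕ) : ℝ) := by push_cast; ring
              _ = (((n+1) * n.choose (i+1) : ℕ) : ℝ) := by rw [c3]
              _ = ((n:ℝ)+1) * (n.choose (i+1) : ℝ) := by push_cast; ring
          rw [ha, e2, e3]
          have e5 : y + (((n-1-i : ℕ):ℝ) + 1) = (y+1) + ((n-1-i : ℕ):ℝ) := by ring
          rw [e5]
          calc ((n+1).choose (i+1) : ℝ) * x * (x+i+1)^i *
                ((((n-1-i : ℕ):ℝ)+1) * ((y+1) + ((n-1-i : ℕ):ℝ))^(n-1-i) * 1)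
              = ((((n-1-i:ℕ):ℝ)+1) * ((n+1).choose (i+1) : ℝ)) *
                  (x * (x+i+1)^i * ((y+1) + ((n-1-i : ℕ):ℝ))^(n-1-i)) := by ring
            _ = (((n:ℝ)+1) * (n.choose (i+1) : ℝ)) *
                  (x * (x+i+1)^i * ((y+1) + ((n-1-i : ℕ):ℝ))^(n-1-i)) := by
                rw [← e3, e4]
            _ = ((n:ℝ)+1) * ((n.choose (i+1) : ℝ) * x * (x+i+1)^i *
                  ((y+1) + ((n-1-i : ℕ):ℝ))^(n-1-i)) := by ring
        rw [Finset.sum_congr rfl hterm, ← Finset.mul_sum, IH x (y+1)]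
        push_cast
        ring
      rw [hkey] at hfd
      have := hfd.sub hgd
      rw [sub_self] at this
      exact this
    have hdiff : Differentiable ℝ (fun y => f y - g y) := fun y => (hL y).differentiableAt
    set y₁ : ℝ := -(x + ((n:ℝ)+1)) with hy₁
    have hconst := is_const_of_deriv_eq_zero hdiff (fun y => (hL y).deriv) y₀ y₁
    have hfe : f y₁ = (-1:ℝ)^n * x^(n+1) := by
      rw [show f y₁ = ∑ i ∈ range (n+1), a i * (y₁ + ((n-i : ℕ):ℝ))^(n-i) from rfl]
      have hterm : ∀ i ∈ range (n+1),
          a i * (y₁ + ((n-i : ℕ):ℝ))^(n-i)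
          = (x * (-1:ℝ)^(n+1)) * ((-1:ℝ)^(i+1) * ((n+1).choose (i+1) : ℝ) * (x+((i+1:ℕ):ℝ))^n) := by
        intro i hi
        simp only [mem_range] at hi
        have hle : i ≤ n := Nat.le_of_lt_succ hi
        have e1 : (y₁ + ((n-i : ℕ):ℝ)) = -(x + ((i:ℝ)+1)) := by
          rw [hy₁, Nat.cast_sub hle]; ring
        rw [e1, ha]
        have e2 : (-(x + ((i:ℝ)+1)))^(n-i) = (-1:ℝ)^(n-i) * (x+(i:ℝ)+1)^(n-i) := by
          rw [neg_pow]; ring_nf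
        have e3 : (x+(i:ℝ)+1)^i * (x+(i:ℝ)+1)^(n-i) = (x+(i:ℝ)+1)^n := by
          rw [← pow_add]; congr 1; omega
        have e4 : (-1:ℝ)^(n-i) = (-1:ℝ)^(n+1) * (-1:ℝ)^(i+1) := by
          rw [← pow_add, show n+1+(i+1) = (n-i) + 2*(i+1) by omega, pow_add, pow_mul]
          norm_num
        calc ((n+1).choose (i+1) : ℝ) * x * (x+i+1)^i * (-(x + ((i:ℝ)+1)))^(n-i)
            = ((n+1).choose (i+1) : ℝ) * x * (-1:ℝ)^(n-i) * ((x+(i:ℝ)+1)^i * (x+(i:ℝ)+1)^(n-i)) := by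
              rw [e2]; ring
          _ = ((n+1).choose (i+1) : ℝ) * x * ((-1:ℝ)^(n+1) * (-1:ℝ)^(i+1)) * (x+(i:ℝ)+1)^n := by
              rw [e3, e4]
          _ = (x * (-1:ℝ)^(n+1)) * ((-1:ℝ)^(i+1) * ((n+1).choose (i+1) : ℝ) * (x+((i+1:ℕ):ℝ))^n) := by
              push_cast; ring
      rw [Finset.sum_congr rfl hterm, ← Finset.mul_sum]
      have hfd0 := fin_diff n (n+1) (Nat.lt_succ_self n) x
      rw [Finset.sum_range_succ' (fun k => (-1:ℝ)^k * ((n+1).choose k : ℝ) * (x + (k:ℕ))^n) (n+1)]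
        at hfd0
      simp only [pow_zero, Nat.choose_zero_right, Nat.cast_one, Nat.cast_zero, add_zero,
        one_mul] at hfd0
      have hsum : ∑ i ∈ range (n+1), (-1:ℝ)^(i+1) * ((n+1).choose (i+1) : ℝ) * (x+((i+1:ℕ):ℝ))^n
          = -x^n := by
        have : ∀ i ∈ range (n+1), (-1:ℝ)^(i+1) * ((n+1).choose (i+1) : ℝ) * (x+((i+1:ℕ):ℝ))^n
            = (-1:ℝ)^(i+1) * ((n+1).choose (i+1) : ℝ) * (x+(((i+1):ℕ):ℝ))^n := fun i _ => rfl
        linarith [hfd0]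
      rw [hsum, pow_succ (-1:ℝ) n, pow_succ x n]
      ring
    have hge : g y₁ = (-1:ℝ)^n * x^(n+1) := by
      rw [show g y₁ = (x + y₁ + ((n:ℝ)+1))^(n+1) - (y₁ + ((n:ℝ)+1))^(n+1) from rfl, hy₁]
      have e1 : (x + -(x + ((n:ℝ)+1)) + ((n:ℝ)+1)) = 0 := by ring
      have e2 : (-(x + ((n:ℝ)+1)) + ((n:ℝ)+1)) = -x := by ring
      rw [e1, e2, zero_pow (Nat.succ_ne_zero n), neg_pow]
      rw [pow_succ (-1:ℝ) n]
      ring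
    have : f y₀ = g y₀ := by
      have := hconst
      rw [hfe, hge] at this
      linarith
    calc ∑ i ∈ range (n+1), ((n+1).choose (i+1) : ℝ) * x * (x+i+1)^i *
          (y₀ + ((n+1-1-i : ℕ):ℝ))^(n+1-1-i)
        = ∑ i ∈ range (n+1), a i * (y₀ + ((n-i : ℕ):ℝ))^(n-i) := by
          refine Finset.sum_congr rfl fun i _ => ?_
          rw [ha]
          congr 2
      _ = (x + y₀ + ((n:ℝ)+1))^(n+1) - (y₀ + ((n:ℝ)+1))^(n+1) := this
      _ = (x + y₀ + ((n+1 : ℕ):ℝ))^(n+1) - (y₀ + ((n+1:ℕ):ℝ))^(n+1) := by push_cast; ring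

lemma star' (m : ℕ) :
    (((m+1:ℕ):ℝ))^(m+1)/((m+1).factorial : ℝ)
      - ∑ i ∈ range m, ((i:ℝ)^i/((i+1).factorial : ℝ)) * (((m-i:ℕ):ℝ)^(m-i)/((m-i).factorial : ℝ))
      = (m:ℝ)^m/(m.factorial : ℝ) := by
  have habel := abel (m+1) (-1) 0
  have hterm : ∀ i ∈ range (m+1),
      ((m+1).choose (i+1) : ℝ) * (-1) * ((-1)+i+1)^i * ((0:ℝ) + ((m+1-1-i : ℕ):ℝ))^(m+1-1-i)
      = -(((m+1).choose (i+1) : ℝ) * (i:ℝ)^i * ((m-i : ℕ):ℝ)^(m-i)) := by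
    intro i _
    have e0 : ((-1:ℝ)+i+1) = (i:ℝ) := by ring
    have e1 : (m+1-1-i : ℕ) = m - i := by omega
    rw [e0, e1, zero_add]
    ring
  rw [Finset.sum_congr rfl hterm, Finset.sum_neg_distrib] at habel
  have e2 : ((-1:ℝ) + 0 + ((m+1:ℕ):ℝ)) = (m:ℝ) := by push_cast; ring
  have e3 : ((0:ℝ) + ((m+1:ℕ):ℝ)) = (m:ℝ)+1 := by push_cast; ring
  rw [e2, e3] at habel
  -- split off the i = m term
  rw [Finset.sum_range_succ] at habel
  have e4 : ((m+1).choose (m+1) : ℝ) * (m:ℝ)^m * ((m-m : ℕ):ℝ)^(m-m) = (m:ℝ)^m := by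
    simp
  rw [e4] at habel
  have hsum : ∑ i ∈ range m, ((m+1).choose (i+1) : ℝ) * (i:ℝ)^i * ((m-i : ℕ):ℝ)^(m-i)
      = ((m:ℝ)+1)^(m+1) - (m:ℝ)^(m+1) - (m:ℝ)^m := by linarith
  have hfac : ∀ i ∈ range m,
      ((i:ℝ)^i/((i+1).factorial : ℝ)) * (((m-i:ℕ):ℝ)^(m-i)/((m-i).factorial : ℝ))
      = (((m+1).choose (i+1) : ℝ) * (i:ℝ)^i * ((m-i : ℕ):ℝ)^(m-i)) / ((m+1).factorial : ℝ) := by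
    intro i hi
    simp only [mem_range] at hi
    have hle : i+1 ≤ m+1 := by omega
    have hch : ((m+1).choose (i+1) : ℝ) = ((m+1).factorial : ℝ) /
        (((i+1).factorial : ℝ) * (((m+1)-(i+1)).factorial : ℝ)) := Nat.cast_choose ℝ hle
    have e5 : (m+1)-(i+1) = m - i := by omega
    rw [e5] at hch
    have h1 : ((i+1).factorial : ℝ) ≠ 0 := Nat.cast_ne_zero.mpr (Nat.factorial_ne_zero _)
    have h2 : ((m-i).factorial : ℝ) ≠ 0 := Nat.cast_ne_zero.mpr (Nat.factorial_ne_zero _)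
    have h3 : ((m+1).factorial : ℝ) ≠ 0 := Nat.cast_ne_zero.mpr (Nat.factorial_ne_zero _)
    rw [hch]
    field_simp
  rw [Finset.sum_congr rfl hfac, ← Finset.sum_div, hsum]
  have hm1 : ((m+1:ℕ):ℝ) = (m:ℝ)+1 := by push_cast; ring
  have hfs : ((m+1).factorial : ℝ) = ((m:ℝ)+1) * (m.factorial : ℝ) := by
    rw [Nat.factorial_succ]; push_cast; ring
  have h3 : (m.factorial : ℝ) ≠ 0 := Nat.cast_ne_zero.mpr (Nat.factorial_ne_zero _)
  have h4 : ((m:ℝ)+1) ≠ 0 := by positivity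
  rw [hm1, hfs]
  field_simp
  ring

lemma coeff_pow_zero {W : PowerSeries ℝ} (hW0 : constantCoeff W = 0)
    {k m : ℕ} (h : k < m) : coeff k (W^m) = 0 := by
  have hdvd : (X : PowerSeries ℝ)^m ∣ W^m := pow_dvd_pow_of_dvd (X_dvd_iff.mpr hW0) m
  exact (X_pow_dvd_iff.mp hdvd) k h

/-- Let `Y₀(s) = ∑_{n≥0} (nⁿ/(n+1)!)·s^{n+1}` (with `0⁰ = 1`).  Then
`W(s) = s/(1−Y₀(s))` is a formal power series with zero constant term and
`W(s)·exp(−W(s)) = s`, i.e. `W` is the compositional inverse of `z·e^{−z}`.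
Here `E = exp(−W)` is the formal composition, whose `n`-th coefficient is
`∑_{m≤n} ((−1)^m/m!)·[sⁿ](W^m)` (the sum truncates since `W` has zero
constant term). -/
theorem lambert_inverse_of_moment_series
    (Y₀ W E : PowerSeries ℝ)
    (hY₀ : Y₀ = PowerSeries.mk (fun m =>
      if m = 0 then 0 else ((m - 1 : ℕ) : ℝ) ^ (m - 1) / (Nat.factorial m : ℝ)))
    (hW : W = PowerSeries.X * (1 - Y₀)⁻¹)
    (hE : E = PowerSeries.mk (fun n =>
      ∑ m ∈ Finset.range (n + 1),
        (-1 : ℝ) ^ m / (Nat.factorial m : ℝ) * PowerSeries.coeff n (W ^ m))) :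
    PowerSeries.constantCoeff W = 0 ∧ W * E = PowerSeries.X := by
  set F : PowerSeries ℝ := 1 - Y₀ with hF
  have hcF : ∀ j, coeff j F = if j = 0 then 1 else -(((j-1 : ℕ):ℝ)^(j-1) / (j.factorial : ℝ)) := by
    intro j
    rw [hF, map_sub, hY₀, coeff_mk]
    rcases Nat.eq_zero_or_pos j with hj | hj
    · subst hj; simp
    · rw [if_neg (by omega), if_neg (by omega), PowerSeries.coeff_one, if_neg (by omega)]
      ring
  have hF0 : constantCoeff F = 1 := by
    rw [← coeff_zero_eq_constantCoeff, hcF]; simp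
  have hFne : constantCoeff F ≠ 0 := by rw [hF0]; norm_num
  have hFne' : F ≠ 0 := fun h => hFne (by rw [h]; simp)
  have hWF : W * F = X := by
    rw [hW, mul_assoc, PowerSeries.inv_mul_cancel F hFne, mul_one]
  have hW0 : constantCoeff W = 0 := by
    rw [hW, map_mul, constantCoeff_X, zero_mul]
  set A : PowerSeries ℝ := d⁄dX ℝ Y₀ with hA
  have hcA : ∀ n, coeff n A = (n:ℝ)^n / (n.factorial : ℝ) := by
    intro n
    rw [hA, coeff_derivative, hY₀, coeff_mk, if_neg (Nat.succ_ne_zero n)]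
    have e1 : (n + 1 - 1 : ℕ) = n := rfl
    rw [e1, Nat.factorial_succ]
    have h1 : ((n+1).factorial : ℝ) ≠ 0 := Nat.cast_ne_zero.mpr (Nat.factorial_ne_zero _)
    push_cast
    have h2 : (n.factorial : ℝ) ≠ 0 := Nat.cast_ne_zero.mpr (Nat.factorial_ne_zero _)
    field_simp
  -- the key combinatorial identity, in power series form
  have hstar : F * A = F + X * A := by
    ext n
    rw [PowerSeries.coeff_mul, Finset.Nat.sum_antidiagonal_eq_sum_range_succ_mk]
    rcases Nat.eq_zero_or_pos n with hn | hn
    · subst hn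
      have hXA : coeff 0 (X * A) = 0 := by
        rw [coeff_zero_eq_constantCoeff, map_mul, constantCoeff_X, zero_mul]
      rw [range_one, sum_singleton, map_add, hXA, Nat.sub_zero, hcF 0, hcA 0]
      norm_num
    · obtain ⟨m, rfl⟩ : ∃ m, n = m + 1 := ⟨n - 1, by omega⟩
      rw [Finset.sum_range_succ'
        (fun j => coeff j F * coeff (m + 1 - j) A) (m+1)]
      have hterm : ∀ i ∈ range (m+1), coeff (i+1) F * coeff (m + 1 - (i+1)) A
          = -(((i:ℕ):ℝ)^i/((i+1).factorial : ℝ))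
              * (((m-i:ℕ):ℝ)^(m-i)/((m-i).factorial : ℝ)) := by
        intro i _
        have e1 : (m + 1 - (i+1) : ℕ) = m - i := by omega
        rw [e1, hcF, hcA, if_neg (Nat.succ_ne_zero i)]
        have e2 : (i + 1 - 1 : ℕ) = i := rfl
        rw [e2]
      rw [Finset.sum_congr rfl hterm]
      rw [Finset.sum_range_succ]
      have e3 : -(((m:ℕ):ℝ)^m/((m+1).factorial : ℝ))
          * (((m-m:ℕ):ℝ)^(m-m)/((m-m).factorial : ℝ))
          = -((m:ℝ)^m/((m+1).factorial : ℝ)) := by simp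
      rw [e3, map_add, coeff_succ_X_mul]
      simp only [Nat.sub_zero]
      rw [hcF 0, hcF (m+1), hcA m, hcA (m+1)]
      simp only [if_pos rfl, if_neg (m.succ_ne_zero), Nat.sub_zero, Nat.add_sub_cancel, one_mul]
      have hs := star' m
      have : ∑ i ∈ range m, -(((i:ℕ):ℝ)^i/((i+1).factorial : ℝ))
              * (((m-i:ℕ):ℝ)^(m-i)/((m-i).factorial : ℝ))
          = -∑ i ∈ range m, (((i:ℕ):ℝ)^i/((i+1).factorial : ℝ))
              * (((m-i:ℕ):ℝ)^(m-i)/((m-i).factorial : ℝ)) := by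
        rw [← Finset.sum_neg_distrib]
        exact Finset.sum_congr rfl fun i _ => by ring
      rw [this]
      push_cast at hs ⊢
      linarith
  -- A * (1 - W) = 1
  have hA1W : A * (1 - W) = 1 := by
    have h1 : (A * (1 - W)) * F = 1 * F := by
      linear_combination hstar - A * hWF
    exact mul_right_cancel₀ hFne' h1
  -- derivative relations
  have hdF : d⁄dX ℝ F = -(d⁄dX ℝ W) * F := by
    have hdX : d⁄dX ℝ (W * F) = 1 := by rw [hWF, derivative_X]
    rw [Derivation.leibniz, smul_eq_mul, smul_eq_mul] at hdX
    have hdFA : d⁄dX ℝ F = -A := by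
      rw [hF, hA]
      rw [map_sub]
      simp
    rw [hdFA] at hdX ⊢
    -- hdX : W * -A + F * d⁄dX W = 1
    have hFdW : F * d⁄dX ℝ W = A := by
      have h2 : A * (1:PowerSeries ℝ) - A * W = 1 := by
        rw [← mul_sub, hA1W]
      linear_combination hdX - h2
    rw [neg_mul, ← hFdW]
    ring
  -- coefficients of E
  have hcE : ∀ n, coeff n E
      = ∑ m ∈ range (n+1), (-1:ℝ)^m / (m.factorial : ℝ) * coeff n (W^m) := by
    intro n; rw [hE, coeff_mk]
  set S : ℕ → PowerSeries ℝ :=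
    fun N => ∑ m ∈ range (N+1), ((-1:ℝ)^m / (m.factorial : ℝ)) • W^m with hS
  have hScoeff : ∀ N k, k ≤ N → coeff k (S N) = coeff k E := by
    intro N k hk
    rw [hS]
    simp only [map_sum, LinearMap.map_smul, smul_eq_mul]
    rw [hcE k]
    symm
    apply Finset.sum_subset
    · exact Finset.range_subset_range.mpr (by omega)
    · intro m hm hnot
      simp only [mem_range] at hm hnot
      rw [coeff_pow_zero hW0 (by omega)]
      ring
  have hdS : ∀ N, d⁄dX ℝ (S (N+1)) = -(d⁄dX ℝ W) * S N := by
    intro N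
    rw [hS, map_sum]
    have hterm : ∀ m : ℕ, d⁄dX ℝ (((-1:ℝ)^m / (m.factorial : ℝ)) • W^m)
        = ((-1:ℝ)^m / (m.factorial : ℝ) * (m:ℝ)) • (W^(m-1) * d⁄dX ℝ W) := by
      intro m
      rw [Derivation.map_smul, Derivation.leibniz_pow, smul_eq_mul,
        ← Nat.cast_smul_eq_nsmul ℝ m, smul_smul]
    rw [Finset.sum_congr rfl (fun m _ => hterm m)]
    rw [Finset.sum_range_succ'
      (fun m => ((-1:ℝ)^m / (m.factorial : ℝ) * (m:ℝ)) • (W^(m-1) * d⁄dX ℝ W)) (N+1)]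
    have hz : ((-1:ℝ)^0 / ((0:ℕ).factorial : ℝ) * ((0:ℕ):ℝ)) • (W^(0-1) * d⁄dX ℝ W) = 0 := by
      norm_num
    rw [hz, add_zero]
    have hj : ∀ j ∈ range (N+1),
        ((-1:ℝ)^(j+1) / ((j+1).factorial : ℝ) * (((j+1):ℕ):ℝ)) • (W^(j+1-1) * d⁄dX ℝ W)
        = -(((-1:ℝ)^j / (j.factorial : ℝ)) • (W^j * d⁄dX ℝ W)) := by
      intro j _
      have e1 : (j+1-1 : ℕ) = j := rfl
      have e2 : ((-1:ℝ)^(j+1) / ((j+1).factorial : ℝ) * (((j+1):ℕ):ℝ))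
          = -((-1:ℝ)^j / (j.factorial : ℝ)) := by
        rw [Nat.factorial_succ, pow_succ]
        have h1 : (j.factorial : ℝ) ≠ 0 := Nat.cast_ne_zero.mpr (Nat.factorial_ne_zero _)
        have h2 : ((j:ℝ)+1) ≠ 0 := by positivity
        push_cast
        field_simp
      rw [e1, e2, neg_smul]
    rw [Finset.sum_congr rfl hj]
    rw [neg_mul, Finset.mul_sum, ← Finset.sum_neg_distrib]
    apply Finset.sum_congr rfl
    intro j _
    rw [mul_smul_comm, mul_comm (d⁄dX ℝ W) (W^j)]
  have hdE : d⁄dX ℝ E = -(d⁄dX ℝ W) * E := by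
    ext n
    rw [coeff_derivative, ← hScoeff (n+1) (n+1) le_rfl, ← coeff_derivative, hdS n]
    rw [neg_mul, map_neg, neg_mul, map_neg, PowerSeries.coeff_mul, PowerSeries.coeff_mul]
    congr 1
    apply Finset.sum_congr rfl
    intro p hp
    rw [Finset.HasAntidiagonal.mem_antidiagonal] at hp
    rw [hScoeff n p.2 (by omega)]
  -- E = F
  have hEF : E = F := by
    have hu : ∀ n, coeff n (E - F) = 0 := by
      intro n
      induction n using Nat.strong_induction_on with
      | _ n ih =>
        rcases Nat.eq_zero_or_pos n with h0 | h0
        · subst h0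
          rw [map_sub]
          have hE0 : coeff 0 E = 1 := by
            rw [hcE 0]
            simp
          rw [hE0, hcF 0]
          norm_num
        · obtain ⟨m, rfl⟩ : ∃ m, n = m + 1 := ⟨n - 1, by omega⟩
          have hd2 : d⁄dX ℝ (E - F) = -(d⁄dX ℝ W) * (E - F) := by
            rw [map_sub, hdE, hdF]
            ring
          have hzz : coeff m (-(d⁄dX ℝ W) * (E - F)) = 0 := by
            rw [PowerSeries.coeff_mul]
            apply Finset.sum_eq_zero
            intro p hp
            rw [Finset.HasAntidiagonal.mem_antidiagonal] at hp
            rw [ih p.2 (by omega), mul_zero]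
          have hmain : coeff (m+1) (E - F) * ((m:ℝ)+1) = 0 := by
            rw [← coeff_derivative, hd2, hzz]
          have hne : ((m:ℝ)+1) ≠ 0 := by positivity
          exact (mul_eq_zero.mp hmain).resolve_right hne
    have : E - F = 0 := PowerSeries.ext fun n => by rw [hu n, map_zero]
    exact sub_eq_zero.mp this
  refine ⟨hW0, ?_⟩
  rw [hEF, hWF]
end

section
/- Fix s with 0 < s < e^{−1} and let λ < 0 be any real solution of λ + s·e^{−λ} = 0. Then the functions X_u := 1 − e^{λu} and Y_u := 1 − e^{−λ(u−1)}, for u ∈ [0,1], satisfy X₀ = 0, Y₁ = 0, and solve the integral system X_u = s·∫₀^u (1 − Y_v)^{−1} dv and Y_u = s·∫_u^1 (1 − X_v)^{−1} dv. -/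
open intervalIntegral in
lemma integral_exp_mul_real (lam a b : ℝ) (hlam : lam ≠ 0) :
    ∫ v in a..b, Real.exp (lam * v) = (Real.exp (lam * b) - Real.exp (lam * a)) / lam := by
  rw [integral_comp_mul_left Real.exp hlam, integral_exp, smul_eq_mul]
  field_simp

/-- Fix `0 < s < e⁻¹` and let `λ < 0` solve `λ + s·e^{−λ} = 0`.  Then
`X_u = 1 − e^{λu}` and `Y_u = 1 − e^{−λ(u−1)}` satisfy `X₀ = 0`, `Y₁ = 0` and
solve the integral system `X_u = s∫₀ᵘ (1−Y_v)⁻¹ dv`,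
`Y_u = s∫ᵤ¹ (1−X_v)⁻¹ dv`. -/
theorem explicit_solution_integral_system
    (s lam : ℝ) (hs0 : 0 < s) (hs1 : s < Real.exp (-1))
    (hlam : lam < 0) (heq : lam + s * Real.exp (-lam) = 0)
    (X Y : ℝ → ℝ)
    (hX : ∀ u, X u = 1 - Real.exp (lam * u))
    (hY : ∀ u, Y u = 1 - Real.exp (-lam * (u - 1))) :
    X 0 = 0 ∧ Y 1 = 0 ∧
    ∀ u ∈ Set.Icc (0:ℝ) 1,
      X u = s * ∫ v in (0:ℝ)..u, (1 - Y v)⁻¹ ∧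
      Y u = s * ∫ v in u..(1:ℝ), (1 - X v)⁻¹ := by
  have hlam' : lam ≠ 0 := ne_of_lt hlam
  have hs : s = -lam * Real.exp lam := by
    have h1 : s * Real.exp (-lam) = -lam := by linarith
    have := congrArg (· * Real.exp lam) h1
    simpa [mul_assoc, ← Real.exp_add] using this
  have h1 : Real.exp lam * Real.exp (-lam) = 1 := by
    rw [← Real.exp_add]; simp
  refine ⟨by simp [hX], by simp [hY], fun u hu => ?_⟩
  constructor
  · have hint : ∀ v, (1 - Y v)⁻¹ = Real.exp (-lam) * Real.exp (lam * v) := by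
      intro v
      rw [hY, sub_sub_cancel, ← Real.exp_neg, ← Real.exp_add]
      congr 1; ring
    simp_rw [hint]
    rw [intervalIntegral.integral_const_mul, integral_exp_mul_real lam 0 u hlam',
      hX, hs]
    have h3 : -lam * Real.exp lam *
        (Real.exp (-lam) * ((Real.exp (lam * u) - Real.exp (lam * 0)) / lam)) =
        -(Real.exp lam * Real.exp (-lam)) * (Real.exp (lam * u) - Real.exp (lam * 0)) := by
      field_simp
    rw [h3, h1]
    simp
  · have hint : ∀ v, (1 - X v)⁻¹ = Real.exp (-lam * v) := by
      intro v
      rw [hX, sub_sub_cancel, ← Real.exp_neg]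
      congr 1; ring
    simp_rw [hint]
    rw [integral_exp_mul_real (-lam) u 1 (neg_ne_zero.mpr hlam'), hY, hs]
    have h3 : -lam * Real.exp lam *
        ((Real.exp (-lam * 1) - Real.exp (-lam * u)) / -lam) =
        Real.exp lam * Real.exp (-lam * 1) - Real.exp lam * Real.exp (-lam * u) := by
      field_simp
    rw [h3]
    have h4 : Real.exp lam * Real.exp (-lam * 1) = 1 := by simpa using h1
    have h5 : Real.exp lam * Real.exp (-lam * u) = Real.exp (-lam * (u - 1)) := by
      rw [← Real.exp_add]; congr 1; ring
    rw [h4, h5]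
end
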